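/- Suppose δ_e is invertible. The map ρ⁻ removing the central cup and cap extends to an algebra isomorphism from the idempotent subalgebra (e'/δ_e) b'_{2m}(δ, δ_e, κ) (e'/δ_e) onto b'_{2m−2}(δ, κ, δ_e); in particular the roles of the parameters δ_e and κ are interchanged. -/

import Mathlib

/-!
STATEMENT 12.
Suppose `δ_e` is invertible.  In the achiral algebra `b'_{2m}(δ, δ_e, κ)` (modelled by
its fundamental right-half strips, `WBasic` strip diagrams, with structure constants
`wCoeff`: `δ` per mirror pair of loops, `δ_e` per white centre-crossing loop, `κ` per
black centre-crossing loop), the diagrams containing the central cup and cap are exactly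
the strips with `dest 0 = west` and `dest (2m−1) = west` (`CupCap`); normalised by
`1/δ_e`, they form a basis of the idempotent subalgebra `(e'/δ_e) b'_{2m} (e'/δ_e)`.
The map `ρ⁻` removes the central cup and cap (`shrink`, deleting the two points adjacent
to the wall and shifting indices down by one).  The theorem: `ρ⁻` is a bijection onto
the basis of `b'_{2m−2}`, it intertwines the composites, and it matches the normalised
structure constants with the parameters `δ_e` and `κ` interchanged — i.e. `ρ⁻` extends
to an algebra isomorphism `(e'/δ_e) b'_{2m}(δ, δ_e, κ) (e'/δ_e) ≅ b'_{2m−2}(δ, κ, δ_e)`.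
-/

open scoped Classical

/-- Destination of a boundary point of a diagram drawn in the fundamental strip (between
the `0`-reflection wall `W` and the `1`-reflection wall `E`) of an affine symmetric
(periodic, left-right symmetric) Temperley–Lieb diagram: it is joined to another boundary
point, or exits through the `0`-wall (west) or the `1`-wall (east). -/
inductive SDest : Type
  | pt (j : ℕ) : SDest
  | west : SDest
  | east : SDest
deriving DecidableEq

/-- A strip diagram with `m` northern and `m` southern boundary points (circle indexing:
top `0, …, m−1` left to right, bottom `m, …, 2m−1` right to left), together with a number
of belts (non-contractible loops, drawn as wall-to-wall strands). This is the fundamental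
domain model of an affine symmetric TL diagram of period `2m`. -/
structure StripDiagram (m : ℕ) : Type where
  dest : ℕ → SDest
  belts : ℕ

/-- Two chords `{a,b}`, `{c,d}` on the boundary circle cross. -/
def chordsCross (a b c d : ℕ) : Prop :=
  (min a b < min c d ∧ min c d < max a b ∧ max a b < max c d) ∨
  (min c d < min a b ∧ min a b < max c d ∧ max c d < max a b)

/-- The chord `{c, j}` spans the eastern boundary gap (between points `m−1` and `m`). -/
def SContainsE (m c j : ℕ) : Prop := min c j < m ∧ m ≤ max c j

/-- Planarity/well-formedness of a strip diagram: matching strands are involutive and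
non-crossing, wall-exiting strands do not cross matching strands or each other, and
belts (wall-to-wall strands) are compatible with everything. -/
def StripWf (m : ℕ) (D : StripDiagram m) : Prop :=
  (∀ i, 2 * m ≤ i → D.dest i = SDest.pt i) ∧
  (∀ i j, i < 2 * m → D.dest i = SDest.pt j →
    j < 2 * m ∧ j ≠ i ∧ D.dest j = SDest.pt i) ∧
  (∀ i j i' j', i < 2 * m → i' < 2 * m → D.dest i = SDest.pt j →
    D.dest i' = SDest.pt j' → ¬ chordsCross i j i' j') ∧
  (∀ i c j, i < 2 * m → c < 2 * m → D.dest i = SDest.west →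
    D.dest c = SDest.pt j → ¬ (min c j < i ∧ i < max c j)) ∧
  (∀ i c j, i < 2 * m → c < 2 * m → D.dest i = SDest.east →
    D.dest c = SDest.pt j → ((min c j < i ∧ i < max c j) ↔ SContainsE m c j)) ∧
  (∀ i j, i < 2 * m → j < 2 * m → D.dest i = SDest.west → D.dest j = SDest.east →
    ¬ ((i < m ∧ j < i) ∨ (m ≤ i ∧ i < j))) ∧
  (1 ≤ D.belts → ∀ c j, c < 2 * m → D.dest c = SDest.pt j → ¬ SContainsE m c j)

/-- Colouring-composability: the numbers of `0`-wall and `1`-wall crossings (including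
belts) are even. -/
def CCcond (m : ℕ) (D : StripDiagram m) : Prop :=
  ({i : ℕ | i < 2 * m ∧ D.dest i = SDest.west}.ncard + D.belts) % 2 = 0 ∧
  ({i : ℕ | i < 2 * m ∧ D.dest i = SDest.east}.ncard + D.belts) % 2 = 0

/-- A basis diagram of the affine symmetric TL algebra `b^φ_{2m}`: a well-formed,
colouring-composable strip diagram with at most one belt (and none of the reducible
features, which the strip encoding cannot represent). -/
def SBasic (m : ℕ) (D : StripDiagram m) : Prop :=
  StripWf m D ∧ D.belts ≤ 1 ∧ CCcond m D

section Glue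

variable (m : ℕ) (D1 D2 : StripDiagram m)

/-- Point lookup in the two-layer concatenation of `D1` (layer `false`) over `D2`. -/
def ldest : Bool × ℕ → SDest := fun x => if x.1 then D2.dest x.2 else D1.dest x.2

/-- One step of connectivity in the concatenation: follow a strand of either layer, or
pass through the glued middle edge (bottom point `i` of `D1` is glued to top point
`2m−1−i` of `D2`). -/
inductive SStep : Bool × ℕ → Bool × ℕ → Prop
  | arc1 (i j : ℕ) (h : i < 2 * m) (hd : D1.dest i = SDest.pt j) :
      SStep (false, i) (false, j)
  | arc2 (i j : ℕ) (h : i < 2 * m) (hd : D2.dest i = SDest.pt j) :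
      SStep (true, i) (true, j)
  | glue (i : ℕ) (h1 : m ≤ i) (h2 : i < 2 * m) :
      SStep (false, i) (true, 2 * m - 1 - i)

/-- Connectivity in the concatenation. -/
def SConn : Bool × ℕ → Bool × ℕ → Prop := Relation.EqvGen (SStep m D1 D2)

/-- Boundary points of the concatenation: top of layer `1`, bottom of layer `2`. -/
def sBd (i : ℕ) : Bool × ℕ := if i < m then (false, i) else (true, i)

/-- `x` is a `0`-wall (west) end of the concatenation. -/
def isWEnd (x : Bool × ℕ) : Prop := x.2 < 2 * m ∧ ldest m D1 D2 x = SDest.west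

/-- `x` is a `1`-wall (east) end of the concatenation. -/
def isEEnd (x : Bool × ℕ) : Prop := x.2 < 2 * m ∧ ldest m D1 D2 x = SDest.east

/-- The component of `x` contains a boundary point of the concatenation. -/
def touchesBd (x : Bool × ℕ) : Prop := ∃ i, i < 2 * m ∧ SConn m D1 D2 x (sBd m i)

/-- Number of closed (contractible) loops formed in the concatenation: components
touching neither the boundary nor a wall, counted by their minimal middle point. -/
noncomputable def nLoops : ℕ :=
  {i : ℕ | m ≤ i ∧ i < 2 * m ∧ ¬ touchesBd m D1 D2 (false, i) ∧
    (¬ ∃ y, (isWEnd m D1 D2 y ∨ isEEnd m D1 D2 y) ∧ SConn m D1 D2 (false, i) y) ∧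
    (∀ j, m ≤ j → j < 2 * m → SConn m D1 D2 (false, i) (false, j) → i ≤ j)}.ncard

/-- The order of wall ends along a wall (layer `1` ends above layer `2` ends, and within
a layer in increasing circle index). -/
def lexLt (x y : Bool × ℕ) : Prop :=
  (x.1 = false ∧ y.1 = true) ∨ (x.1 = y.1 ∧ x.2 < y.2)

/-- Rank (from the top) of a west-wall end among all west-wall ends. -/
noncomputable def wRank (x : Bool × ℕ) : ℕ :=
  {y : Bool × ℕ | isWEnd m D1 D2 y ∧ lexLt y x}.ncard

/-- Rank of an east-wall end among all east-wall ends. -/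
noncomputable def eRank (x : Bool × ℕ) : ℕ :=
  {y : Bool × ℕ | isEEnd m D1 D2 y ∧ lexLt y x}.ncard

/-- `x` is the upper end of a loop astride the `0`-wall (a component with two west ends
and no boundary point). -/
def isWWTop (x : Bool × ℕ) : Prop :=
  isWEnd m D1 D2 x ∧ ¬ touchesBd m D1 D2 x ∧
  (¬ ∃ y, isEEnd m D1 D2 y ∧ SConn m D1 D2 x y) ∧
  (∀ y, isWEnd m D1 D2 y → SConn m D1 D2 x y → ¬ lexLt y x)

/-- `x` is the upper end of a loop astride the `1`-wall. -/
def isEETop (x : Bool × ℕ) : Prop :=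
  isEEnd m D1 D2 x ∧ ¬ touchesBd m D1 D2 x ∧
  (¬ ∃ y, isWEnd m D1 D2 y ∧ SConn m D1 D2 x y) ∧
  (∀ y, isEEnd m D1 D2 y → SConn m D1 D2 x y → ¬ lexLt y x)

/-- Number of white loops astride the `0`-wall (the region at the top of the `0`-wall is
white; the colour alternates with each wall crossing). -/
noncomputable def nWWwhite : ℕ :=
  {x : Bool × ℕ | isWWTop m D1 D2 x ∧ (wRank m D1 D2 x + 1) % 2 = 0}.ncard

/-- Number of black loops astride the `0`-wall. -/
noncomputable def nWWblack : ℕ :=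
  {x : Bool × ℕ | isWWTop m D1 D2 x ∧ (wRank m D1 D2 x + 1) % 2 = 1}.ncard

/-- Number of white loops astride the `1`-wall (the colour at the top of the `1`-wall
depends on the parity of `m`). -/
noncomputable def nEEwhite : ℕ :=
  {x : Bool × ℕ | isEETop m D1 D2 x ∧ (eRank m D1 D2 x + 1 + m) % 2 = 0}.ncard

/-- Number of black loops astride the `1`-wall. -/
noncomputable def nEEblack : ℕ :=
  {x : Bool × ℕ | isEETop m D1 D2 x ∧ (eRank m D1 D2 x + 1 + m) % 2 = 1}.ncard

/-- Number of new noncontractible loops (wall-to-wall strands) formed in the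
concatenation, counted by their west ends. -/
noncomputable def nWE : ℕ :=
  {x : Bool × ℕ | isWEnd m D1 D2 x ∧ ¬ touchesBd m D1 D2 x ∧
    ∃ y, isEEnd m D1 D2 y ∧ SConn m D1 D2 x y}.ncard

/-- The destination function of the composite diagram. -/
noncomputable def compDest : ℕ → SDest := fun i =>
  if i < 2 * m then
    if h : ∃ j, j < 2 * m ∧ j ≠ i ∧ SConn m D1 D2 (sBd m i) (sBd m j) then
      SDest.pt (Classical.choose h)
    else if ∃ y, isWEnd m D1 D2 y ∧ SConn m D1 D2 (sBd m i) y then SDest.west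
    else SDest.east
  else SDest.pt i

/-- Number of pairs of noncontractible loops removed (each contributing `κ_{LR}`). -/
noncomputable def beltPairs : ℕ := (D1.belts + D2.belts + nWE m D1 D2) / 2

/-- The composite (basic) diagram of the concatenation. -/
noncomputable def compStrip : StripDiagram m :=
  ⟨compDest m D1 D2, (D1.belts + D2.belts + nWE m D1 D2) % 2⟩

end Glue

/-- The scalar produced by reducing the features of the concatenation of two basic
diagrams, with parameters `δ, δ_L, δ_R, κ_L, κ_R, κ_{LR}`. -/
noncomputable def sCoeff {k : Type} [CommRing k] (δ δL δR κL κR κLR : k)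
    (m : ℕ) (D1 D2 : StripDiagram m) : k :=
  δ ^ nLoops m D1 D2 * δL ^ nWWwhite m D1 D2 * κL ^ nWWblack m D1 D2 *
    δR ^ nEEwhite m D1 D2 * κR ^ nEEblack m D1 D2 * κLR ^ beltPairs m D1 D2


/-- The coefficient of the achiral algebra `b'_{2m}(δ, δ_e, κ)`. -/
noncomputable def wCoeff {k : Type} [CommRing k] (δ δe κ : k)
    (m : ℕ) (D1 D2 : StripDiagram m) : k :=
  δ ^ nLoops m D1 D2 * δe ^ nWWwhite m D1 D2 * κ ^ nWWblack m D1 D2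

/-- A basis diagram of the achiral algebra `b'_{2m}`: a well-formed strip with no
eastern exits and no belts. -/
def WBasic (m : ℕ) (D : StripDiagram m) : Prop :=
  StripWf m D ∧ D.belts = 0 ∧ ∀ i, D.dest i ≠ SDest.east

/-- The diagram contains the central cup and cap (the strip strands at the points
adjacent to the wall run into the wall). -/
def CupCap (m : ℕ) (D : StripDiagram m) : Prop :=
  D.dest 0 = SDest.west ∧ D.dest (2 * m - 1) = SDest.west

/-- Removal of the central cup and cap: delete the two points adjacent to the wall and
renumber. -/
def shrink (m : ℕ) (D : StripDiagram m) : StripDiagram (m - 1) :=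
  ⟨fun x => if x < 2 * (m - 1) then
      (match D.dest (x + 1) with
        | SDest.pt j => SDest.pt (j - 1)
        | SDest.west => SDest.west
        | SDest.east => SDest.east)
    else SDest.pt x, 0⟩

open Relation

theorem eqvGen_class {α : Type*} {r : α → α → Prop} (S : α → Prop)
    (h : ∀ x y, r x y → (S x ↔ S y)) :
    ∀ x y, Relation.EqvGen r x y → (S x ↔ S y) := by
  intro x y hxy
  induction hxy with
  | rel x y hr => exact h x y hr
  | refl => exact Iff.rfl
  | symm _ _ _ ih => exact ih.symm
  | trans _ _ _ _ _ ih1 ih2 => exact ih1.trans ih2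

theorem chordsCross_shift (a b c d : ℕ) :
    chordsCross (a+1) (b+1) (c+1) (d+1) ↔ chordsCross a b c d := by
  unfold chordsCross; omega

theorem StripDiagram.ext' {m : ℕ} {A B : StripDiagram m}
    (h1 : ∀ i, A.dest i = B.dest i) (h2 : A.belts = B.belts) : A = B := by
  cases A with
  | mk f b =>
    cases B with
    | mk g c =>
      simp only [StripDiagram.mk.injEq]
      exact ⟨funext h1, h2⟩

section ShrinkExpand

variable {n : ℕ} {D : StripDiagram (n+1)}

theorem pt_bounds (hD : WBasic (n+1) D) (hC : CupCap (n+1) D) {i j : ℕ}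
    (hi : i < 2*(n+1)) (hij : D.dest i = SDest.pt j) :
    1 ≤ i ∧ i ≤ 2*n ∧ 1 ≤ j ∧ j ≤ 2*n ∧ j ≠ i ∧ D.dest j = SDest.pt i := by
  obtain ⟨hj2, hjne, hji⟩ := hD.1.2.1 i j hi hij
  have h0 : D.dest 0 = SDest.west := hC.1
  have h1 : D.dest (2*(n+1)-1) = SDest.west := hC.2
  have hi0 : i ≠ 0 := by rintro rfl; rw [h0] at hij; exact SDest.noConfusion hij
  have hitop : i ≠ 2*(n+1)-1 := by rintro rfl; rw [h1] at hij; exact SDest.noConfusion hij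
  have hj0 : j ≠ 0 := by rintro rfl; rw [h0] at hji; exact SDest.noConfusion hji
  have hjtop : j ≠ 2*(n+1)-1 := by rintro rfl; rw [h1] at hji; exact SDest.noConfusion hji
  exact ⟨by omega, by omega, by omega, by omega, hjne, hji⟩

theorem shrink_dest_of_lt {x : ℕ} (hx : x < 2*n) :
    (shrink (n+1) D).dest x =
      (match D.dest (x+1) with
        | SDest.pt j => SDest.pt (j - 1)
        | SDest.west => SDest.west
        | SDest.east => SDest.east) := by
  unfold shrink
  dsimp only
  rw [if_pos (by omega : x < 2*((n+1)-1))] <;> rcases D.dest (x+1) with _ | _ | _ <;> rfl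

theorem shrink_dest_of_ge {x : ℕ} (hx : 2*n ≤ x) :
    (shrink (n+1) D).dest x = SDest.pt x := by
  unfold shrink
  dsimp only
  rw [if_neg (by omega : ¬ x < 2*((n+1)-1))]

theorem shrink_dest_pt (hD : WBasic (n+1) D) (hC : CupCap (n+1) D) {x j : ℕ}
    (hx : x < 2*n) :
    (shrink (n+1) D).dest x = SDest.pt j ↔ D.dest (x+1) = SDest.pt (j+1) := by
  rw [shrink_dest_of_lt hx]
  constructor
  · intro h
    rcases hd : D.dest (x+1) with j0 | _ | _
    · rw [hd] at h
      simp at h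
      have hb := pt_bounds hD hC (by omega : x+1 < 2*(n+1)) hd
      congr 1
      omega
    · rw [hd] at h; simp at h
    · rw [hd] at h; simp at h
  · intro h
    rw [h]
    simp

theorem shrink_dest_west {x : ℕ} (hx : x < 2*n) :
    (shrink (n+1) D).dest x = SDest.west ↔ D.dest (x+1) = SDest.west := by
  rw [shrink_dest_of_lt hx]
  rcases hd : D.dest (x+1) with _ | _ | _ <;> simp

theorem shrink_no_east (hD : WBasic (n+1) D) :
    ∀ x, (shrink (n+1) D).dest x ≠ SDest.east := by
  intro x
  by_cases hx : x < 2*n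
  · rw [shrink_dest_of_lt hx]
    rcases hd : D.dest (x+1) with _ | _ | _ <;> simp
    exact hD.2.2 _ hd
  · rw [shrink_dest_of_ge (by omega)]; simp

theorem shrink_belts : (shrink (n+1) D).belts = 0 := rfl

theorem shrink_wBasic (hD : WBasic (n+1) D) (hC : CupCap (n+1) D) :
    WBasic n (shrink (n+1) D) := by
  have hne := shrink_no_east (D := D) hD
  refine ⟨⟨?_, ?_, ?_, ?_, ?_, ?_, ?_⟩, rfl, hne⟩
  · intro i hi; exact shrink_dest_of_ge hi
  · intro i j hi hij
    rw [shrink_dest_pt hD hC hi] at hij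
    obtain ⟨_, _, hj1, hj2, hjne, hji⟩ := pt_bounds hD hC (by omega) hij
    refine ⟨by omega, by omega, ?_⟩
    rw [shrink_dest_pt hD hC (by omega)]
    exact hji
  · intro i j i' j' hi hi' hij hij'
    rw [shrink_dest_pt hD hC hi] at hij
    rw [shrink_dest_pt hD hC hi'] at hij'
    have := hD.1.2.2.1 (i+1) (j+1) (i'+1) (j'+1) (by omega) (by omega) hij hij'
    rw [chordsCross_shift] at this; exact this
  · intro i c j hi hc hiw hcj
    rw [shrink_dest_west hi] at hiw
    rw [shrink_dest_pt hD hC hc] at hcj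
    have := hD.1.2.2.2.1 (i+1) (c+1) (j+1) (by omega) (by omega) hiw hcj
    omega
  · intro i c j hi hc hie
    exact absurd hie (hne i)
  · intro i j hi hj hiw hje
    exact absurd hje (hne j)
  · intro h
    exact absurd h (show ¬ (1:ℕ) ≤ 0 by norm_num)

end ShrinkExpand

/-- Inverse of `shrink`: insert the central cup and cap. -/
def expand (n : ℕ) (D' : StripDiagram n) : StripDiagram (n+1) :=
  ⟨fun i => if i = 0 then SDest.west else if i = 2*n+1 then SDest.west
    else if i < 2*n+1 then
      (match D'.dest (i-1) with
        | SDest.pt j => SDest.pt (j+1)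
        | SDest.west => SDest.west
        | SDest.east => SDest.east)
    else SDest.pt i, 0⟩

section Expand

variable {n : ℕ} {D' : StripDiagram n}

theorem expand_dest_mid {i : ℕ} (h1 : 1 ≤ i) (h2 : i ≤ 2*n) :
    (expand n D').dest i =
      (match D'.dest (i-1) with
        | SDest.pt j => SDest.pt (j+1)
        | SDest.west => SDest.west
        | SDest.east => SDest.east) := by
  unfold expand
  dsimp only
  rw [if_neg (by omega : ¬ i = 0), if_neg (by omega : ¬ i = 2*n+1),
    if_pos (by omega : i < 2*n+1)]

theorem expand_dest_zero : (expand n D').dest 0 = SDest.west := rfl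

theorem expand_dest_top : (expand n D').dest (2*n+1) = SDest.west := by
  unfold expand
  dsimp only
  rw [if_neg (by omega : ¬ 2*n+1 = 0), if_pos rfl]

theorem expand_dest_hi {i : ℕ} (h : 2*n+2 ≤ i) : (expand n D').dest i = SDest.pt i := by
  unfold expand
  dsimp only
  rw [if_neg (by omega : ¬ i = 0), if_neg (by omega : ¬ i = 2*n+1),
    if_neg (by omega : ¬ i < 2*n+1)]

theorem expand_dest_pt {i j : ℕ} (h1 : 1 ≤ i) (h2 : i ≤ 2*n) :
    (expand n D').dest i = SDest.pt j ↔ (1 ≤ j ∧ D'.dest (i-1) = SDest.pt (j-1)) := by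
  rw [expand_dest_mid h1 h2]
  rcases hd : D'.dest (i-1) with j0 | _ | _
  · simp only [SDest.pt.injEq]
    omega
  · simp
  · simp

theorem expand_no_east (hD' : WBasic n D') : ∀ i, (expand n D').dest i ≠ SDest.east := by
  intro i
  rcases Nat.eq_zero_or_pos i with rfl | hi
  · rw [expand_dest_zero]; simp
  by_cases h : i ≤ 2*n
  · rw [expand_dest_mid hi h]
    rcases hd : D'.dest (i-1) with _ | _ | _
    · simp
    · simp
    · exact fun _ => hD'.2.2 _ hd
  by_cases h2 : i = 2*n+1
  · subst h2; rw [expand_dest_top]; simp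
  · rw [expand_dest_hi (by omega)]; simp

theorem expand_wBasic (hD' : WBasic n D') : WBasic (n+1) (expand n D') := by
  have hne := expand_no_east (D' := D') hD'
  have key : ∀ i j, i < 2*(n+1) → (expand n D').dest i = SDest.pt j →
      1 ≤ i ∧ i ≤ 2*n ∧ 1 ≤ j ∧ j ≤ 2*n ∧ j ≠ i ∧
        D'.dest (i-1) = SDest.pt (j-1) ∧ D'.dest (j-1) = SDest.pt (i-1) := by
    intro i j hi hij
    have hi1 : 1 ≤ i := by
      rcases Nat.eq_zero_or_pos i with rfl | h
      · rw [expand_dest_zero] at hij; simp at hij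
      · exact h
    have hi2 : i ≤ 2*n := by
      by_contra h
      have h3 : i = 2*n+1 := by omega
      subst h3; rw [expand_dest_top] at hij; simp at hij
    rw [expand_dest_pt hi1 hi2] at hij
    obtain ⟨hj1, hij⟩ := hij
    obtain ⟨hjlt, hjne, hji⟩ := hD'.1.2.1 (i-1) (j-1) (by omega) hij
    exact ⟨hi1, hi2, hj1, by omega, by omega, hij, hji⟩
  refine ⟨⟨?_, ?_, ?_, ?_, ?_, ?_, ?_⟩, rfl, hne⟩
  · intro i hi; exact expand_dest_hi (by omega)
  · intro i j hi hij
    obtain ⟨hi1, hi2, hj1, hj2, hjne, _, hji⟩ := key i j hi hij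
    refine ⟨by omega, hjne, ?_⟩
    rw [expand_dest_pt hj1 hj2]
    exact ⟨by omega, hji⟩
  · intro i j i' j' hi hi' hij hij'
    obtain ⟨hi1, hi2, hj1, hj2, _, hd, _⟩ := key i j hi hij
    obtain ⟨hi1', hi2', hj1', hj2', _, hd', _⟩ := key i' j' hi' hij'
    have h3 := hD'.1.2.2.1 (i-1) (j-1) (i'-1) (j'-1) (by omega) (by omega) hd hd'
    have hcc : ¬ chordsCross ((i-1)+1) ((j-1)+1) ((i'-1)+1) ((j'-1)+1) := by
      rw [chordsCross_shift]; exact h3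
    have e1 : (i-1)+1 = i := by omega
    have e2 : (j-1)+1 = j := by omega
    have e3 : (i'-1)+1 = i' := by omega
    have e4 : (j'-1)+1 = j' := by omega
    rwa [e1, e2, e3, e4] at hcc
  · intro i c j hi hc hiw hcj
    obtain ⟨hc1, hc2, hj1, hj2, _, hd, _⟩ := key c j hc hcj
    rcases Nat.eq_zero_or_pos i with rfl | hi1
    · omega
    by_cases h2 : i = 2*n+1
    · subst h2; omega
    have hi2 : i ≤ 2*n := by omega
    rw [expand_dest_mid hi1 hi2] at hiw
    have hiw' : D'.dest (i-1) = SDest.west := by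
      rcases hd' : D'.dest (i-1) with j0 | _ | _
      · rw [hd'] at hiw; simp at hiw
      · rfl
      · rw [hd'] at hiw; simp at hiw
    have := hD'.1.2.2.2.1 (i-1) (c-1) (j-1) (by omega) (by omega) hiw' hd
    omega
  · intro i c j hi hc hie; exact absurd hie (hne i)
  · intro i j hi hj hiw hje; exact absurd hje (hne j)
  · intro h
    exact absurd h (show ¬ (1:ℕ) ≤ 0 by norm_num)

theorem expand_cupCap : CupCap (n+1) (expand n D') := by
  constructor
  · exact expand_dest_zero
  · have h : 2*(n+1)-1 = 2*n+1 := by omega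
    rw [h]; exact expand_dest_top

theorem shrink_expand (hD' : WBasic n D') : shrink (n+1) (expand n D') = D' := by
  apply StripDiagram.ext'
  · intro x
    by_cases hx : x < 2*n
    · rw [shrink_dest_of_lt hx, expand_dest_mid (by omega) (by omega)]
      have e : x + 1 - 1 = x := by omega
      rw [e]
      rcases hd : D'.dest x with _ | _ | _ <;> simp
    · rw [shrink_dest_of_ge (by omega)]
      exact (hD'.1.1 x (by omega)).symm
  · exact hD'.2.1.symm

theorem expand_shrink {D : StripDiagram (n+1)} (hD : WBasic (n+1) D) (hC : CupCap (n+1) D) :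
    expand n (shrink (n+1) D) = D := by
  apply StripDiagram.ext'
  · intro i
    rcases Nat.eq_zero_or_pos i with rfl | hi1
    · rw [expand_dest_zero]; exact hC.1.symm
    by_cases htop : i = 2*n+1
    · subst htop; rw [expand_dest_top]
      have h2 := hC.2
      rw [show 2*(n+1)-1 = 2*n+1 by omega] at h2
      exact h2.symm
    by_cases hi2 : i ≤ 2*n
    · rw [expand_dest_mid hi1 hi2, shrink_dest_of_lt (by omega : i - 1 < 2*n)]
      have e : i - 1 + 1 = i := by omega
      rw [e]
      rcases hd : D.dest i with j0 | _ | _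
      · have hj1 : 1 ≤ j0 := (pt_bounds hD hC (by omega : i < 2*(n+1)) hd).2.2.1
        show SDest.pt (j0 - 1 + 1) = SDest.pt j0
        congr 1; omega
      · rfl
      · rfl
    · rw [expand_dest_hi (by omega)]
      exact (hD.1.1 i (by omega)).symm
  · exact hD.2.1.symm

end Expand

open Relation

section Walk

variable (N : ℕ) (E1 E2 : StripDiagram N)

/-- Arc-partner involution (identity where there is no arc). -/
noncomputable def arcP : Bool × ℕ → Bool × ℕ := fun x =>
  match ldest N E1 E2 x with
  | SDest.pt j => (x.1, j)
  | _ => x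

/-- Glue-partner involution (identity on boundary points). -/
def glueP : Bool × ℕ → Bool × ℕ := fun x =>
  if x.1 = false ∧ N ≤ x.2 ∧ x.2 < 2*N then (true, 2*N-1-x.2)
  else if x.1 = true ∧ x.2 < N then (false, 2*N-1-x.2)
  else x

/-- The deterministic walk from `u`, alternating arc and glue steps. -/
noncomputable def walkF (u : Bool × ℕ) : ℕ → Bool × ℕ
  | 0 => u
  | (k+1) => if k % 2 = 0 then arcP N E1 E2 (walkF u k) else glueP N (walkF u k)

variable {N E1 E2}

theorem walkF_zero (u : Bool × ℕ) : walkF N E1 E2 u 0 = u := rfl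

theorem walkF_succ (u : Bool × ℕ) (k : ℕ) :
    walkF N E1 E2 u (k+1) =
      if k % 2 = 0 then arcP N E1 E2 (walkF N E1 E2 u k)
      else glueP N (walkF N E1 E2 u k) := rfl

theorem ld_no_east (h1 : WBasic N E1) (h2 : WBasic N E2) (x : Bool × ℕ) :
    ldest N E1 E2 x ≠ SDest.east := by
  obtain ⟨b, i⟩ := x
  cases b
  · exact h1.2.2 i
  · exact h2.2.2 i

theorem ld_pt (h1 : WBasic N E1) (h2 : WBasic N E2) {x : Bool × ℕ} {j : ℕ}
    (hx : x.2 < 2*N) (h : ldest N E1 E2 x = SDest.pt j) :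
    j < 2*N ∧ j ≠ x.2 ∧ ldest N E1 E2 (x.1, j) = SDest.pt x.2 := by
  obtain ⟨b, i⟩ := x
  cases b
  · exact h1.1.2.1 i j hx h
  · exact h2.1.2.1 i j hx h

theorem ld_hi (h1 : WBasic N E1) (h2 : WBasic N E2) {x : Bool × ℕ}
    (hx : 2*N ≤ x.2) : ldest N E1 E2 x = SDest.pt x.2 := by
  obtain ⟨b, i⟩ := x
  cases b
  · exact h1.1.1 i hx
  · exact h2.1.1 i hx

theorem arcP_pt {x : Bool × ℕ} {j : ℕ} (h : ldest N E1 E2 x = SDest.pt j) :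
    arcP N E1 E2 x = (x.1, j) := by
  unfold arcP; rw [h]

theorem arcP_west {x : Bool × ℕ} (h : ldest N E1 E2 x = SDest.west) :
    arcP N E1 E2 x = x := by
  unfold arcP; rw [h]

theorem arcP_east {x : Bool × ℕ} (h : ldest N E1 E2 x = SDest.east) :
    arcP N E1 E2 x = x := by
  unfold arcP; rw [h]

theorem arcP_invol (h1 : WBasic N E1) (h2 : WBasic N E2) (x : Bool × ℕ) :
    arcP N E1 E2 (arcP N E1 E2 x) = x := by
  rcases hd : ldest N E1 E2 x with j | _ | _
  · rw [arcP_pt hd]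
    by_cases hx : x.2 < 2*N
    · obtain ⟨_, _, hj3⟩ := ld_pt h1 h2 hx hd
      rw [arcP_pt hj3]
    · have h0 := ld_hi h1 h2 (by omega : 2*N ≤ x.2)
      rw [h0] at hd
      injection hd with hj
      subst hj
      rw [arcP_pt (show ldest N E1 E2 (x.1, x.2) = SDest.pt x.2 from h0)]
  · rw [arcP_west hd, arcP_west hd]
  · rw [arcP_east hd, arcP_east hd]

theorem glueP_mid1 {x : Bool × ℕ} (hb : x.1 = false) (hn : N ≤ x.2) (hn2 : x.2 < 2*N) :
    glueP N x = (true, 2*N-1-x.2) := by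
  unfold glueP; rw [if_pos ⟨hb, hn, hn2⟩]

theorem glueP_mid2 {x : Bool × ℕ} (hb : x.1 = true) (hn : x.2 < N) :
    glueP N x = (false, 2*N-1-x.2) := by
  unfold glueP
  rw [if_neg (by rw [hb]; simp), if_pos ⟨hb, hn⟩]

theorem glueP_fix {x : Bool × ℕ} (h : ¬(x.1 = false ∧ N ≤ x.2 ∧ x.2 < 2*N))
    (h' : ¬(x.1 = true ∧ x.2 < N)) : glueP N x = x := by
  unfold glueP; rw [if_neg h, if_neg h']

theorem glueP_invol (x : Bool × ℕ) : glueP N (glueP N x) = x := by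
  obtain ⟨b, i⟩ := x
  cases b
  · by_cases h : N ≤ i ∧ i < 2*N
    · have e1 : glueP N ((false, i) : Bool × ℕ) = (true, 2*N-1-i) :=
        glueP_mid1 rfl h.1 h.2
      have e2 : glueP N ((true, 2*N-1-i) : Bool × ℕ) = (false, 2*N-1-(2*N-1-i)) :=
        glueP_mid2 rfl (show 2*N-1-i < N by omega)
      rw [e1, e2]
      simp only [Prod.mk.injEq, true_and]
      omega
    · have e1 : glueP N ((false, i) : Bool × ℕ) = (false, i) :=
        glueP_fix (by intro hc; exact h hc.2) (by intro hc; exact Bool.noConfusion hc.1)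
      rw [e1, e1]
  · by_cases h : i < N
    · have e1 : glueP N ((true, i) : Bool × ℕ) = (false, 2*N-1-i) :=
        glueP_mid2 rfl h
      have e2 : glueP N ((false, 2*N-1-i) : Bool × ℕ) = (true, 2*N-1-(2*N-1-i)) :=
        glueP_mid1 rfl (show N ≤ 2*N-1-i by omega) (show 2*N-1-i < 2*N by omega)
      rw [e1, e2]
      simp only [Prod.mk.injEq, true_and]
      omega
    · have e1 : glueP N ((true, i) : Bool × ℕ) = (true, i) :=
        glueP_fix (by intro hc; exact Bool.noConfusion hc.1) (by intro hc; exact h hc.2)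
      rw [e1, e1]

theorem step_sub (hs : SStep N E1 E2 x y) : y = arcP N E1 E2 x ∨ y = glueP N x := by
  cases hs with
  | arc1 i j h hd =>
    left
    rw [arcP_pt (show ldest N E1 E2 (false, i) = SDest.pt j from hd)]
  | arc2 i j h hd =>
    left
    rw [arcP_pt (show ldest N E1 E2 (true, i) = SDest.pt j from hd)]
  | glue i hg1 hg2 =>
    right
    rw [glueP_mid1 rfl hg1 hg2]

theorem step_rev_sub (h1 : WBasic N E1) (h2 : WBasic N E2)
    (hs : SStep N E1 E2 y x) : y = arcP N E1 E2 x ∨ y = glueP N x := by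
  cases hs with
  | arc1 i j h hd =>
    left
    obtain ⟨_, _, hj3⟩ := ld_pt h1 h2 (show ((false, i) : Bool × ℕ).2 < 2*N from h)
      (show ldest N E1 E2 (false, i) = SDest.pt j from hd)
    rw [arcP_pt hj3]
  | arc2 i j h hd =>
    left
    obtain ⟨_, _, hj3⟩ := ld_pt h1 h2 (show ((true, i) : Bool × ℕ).2 < 2*N from h)
      (show ldest N E1 E2 (true, i) = SDest.pt j from hd)
    rw [arcP_pt hj3]
  | glue i hg1 hg2 =>
    right
    have e : glueP N ((true, 2*N-1-i) : Bool × ℕ) = (false, 2*N-1-(2*N-1-i)) :=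
      glueP_mid2 rfl (show 2*N-1-i < N by omega)
    rw [e]
    simp only [Prod.mk.injEq, true_and]
    omega

theorem sconn_iff_rtg (x y : Bool × ℕ) :
    SConn N E1 E2 x y ↔
      Relation.ReflTransGen (fun a b => SStep N E1 E2 a b ∨ SStep N E1 E2 b a) x y := by
  constructor
  · intro h
    induction h with
    | rel a b hr => exact ReflTransGen.single (Or.inl hr)
    | refl a => exact ReflTransGen.refl
    | symm a b _ ih =>
      exact (@ReflTransGen.stdSymm _ _ ⟨fun p q hpq => hpq.elim Or.inr Or.inl⟩).symm _ _ ih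
    | trans a b c _ _ ih1 ih2 => exact ih1.trans ih2
  · intro h
    induction h with
    | refl => exact EqvGen.refl x
    | tail _ hr ih =>
      cases hr with
      | inl h' => exact EqvGen.trans _ _ _ ih (EqvGen.rel _ _ h')
      | inr h' => exact EqvGen.trans _ _ _ ih (EqvGen.symm _ _ (EqvGen.rel _ _ h'))

theorem walk_closed (h1 : WBasic N E1) (h2 : WBasic N E2) {u : Bool × ℕ}
    (hu : glueP N u = u) (k : ℕ) {y : Bool × ℕ}
    (hy : SStep N E1 E2 (walkF N E1 E2 u k) y ∨ SStep N E1 E2 y (walkF N E1 E2 u k)) :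
    y = walkF N E1 E2 u (k+1) ∨ y = walkF N E1 E2 u (k-1) := by
  have hsub : y = arcP N E1 E2 (walkF N E1 E2 u k) ∨ y = glueP N (walkF N E1 E2 u k) := by
    cases hy with
    | inl h => exact step_sub h
    | inr h => exact step_rev_sub h1 h2 h
  by_cases hk : k % 2 = 0
  · cases hsub with
    | inl h =>
      left; rw [walkF_succ, if_pos hk]; exact h
    | inr h =>
      right
      rcases Nat.eq_zero_or_pos k with rfl | hpos
      · rw [walkF_zero] at h ⊢; rw [h, hu]
      · obtain ⟨k', rfl⟩ : ∃ k', k = k' + 1 := ⟨k - 1, by omega⟩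
        have hW : walkF N E1 E2 u (k'+1) = glueP N (walkF N E1 E2 u k') := by
          rw [walkF_succ, if_neg (by omega)]
        rw [h, hW, glueP_invol]
        simp
  · cases hsub with
    | inl h =>
      right
      obtain ⟨k', rfl⟩ : ∃ k', k = k' + 1 := ⟨k - 1, by omega⟩
      have hW : walkF N E1 E2 u (k'+1) = arcP N E1 E2 (walkF N E1 E2 u k') := by
        rw [walkF_succ, if_pos (by omega)]
      rw [h, hW, arcP_invol h1 h2]
      simp
    | inr h =>
      left; rw [walkF_succ, if_neg hk]; exact h

theorem comp_in_range (h1 : WBasic N E1) (h2 : WBasic N E2) {u y : Bool × ℕ}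
    (hu : glueP N u = u) (hc : SConn N E1 E2 u y) :
    ∃ k, y = walkF N E1 E2 u k := by
  rw [sconn_iff_rtg] at hc
  induction hc with
  | refl => exact ⟨0, rfl⟩
  | tail _ hr ih =>
    obtain ⟨k, rfl⟩ := ih
    rcases walk_closed h1 h2 hu k hr with h | h
    · exact ⟨k+1, h⟩
    · exact ⟨k-1, h⟩

theorem walk_pal (h1 : WBasic N E1) (h2 : WBasic N E2) {u : Bool × ℕ}
    (hu : glueP N u = u) {K : ℕ} (hK1 : K % 2 = 1)
    (hK2 : glueP N (walkF N E1 E2 u K) = walkF N E1 E2 u K) :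
    ∀ t, t ≤ K+1 → walkF N E1 E2 u (K + t) = walkF N E1 E2 u (K + 1 - t) := by
  have base : walkF N E1 E2 u (K+1) = walkF N E1 E2 u K := by
    rw [walkF_succ, if_neg (by omega), hK2]
  have main : ∀ t, t + 1 ≤ K + 1 →
      (walkF N E1 E2 u (K+t) = walkF N E1 E2 u (K+1-t) ∧
       walkF N E1 E2 u (K+t+1) = walkF N E1 E2 u (K+1-(t+1))) := by
    intro t
    induction t with
    | zero =>
      intro _
      constructor
      · rw [show K + 0 = K by omega, show K + 1 - 0 = K + 1 by omega]
        exact base.symm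
      · rw [show K + 0 + 1 = K + 1 by omega, show K + 1 - (0+1) = K by omega]
        exact base
    | succ t ih =>
      intro ht
      have hprev := ih (by omega)
      refine ⟨hprev.2, ?_⟩
      have hKt : t + 1 ≤ K := by omega
      by_cases hp : t % 2 = 0
      · have e1 : walkF N E1 E2 u (K+(t+1)+1) = arcP N E1 E2 (walkF N E1 E2 u (K+t+1)) := by
          rw [show K+(t+1)+1 = (K+t+1)+1 by omega, walkF_succ, if_pos (by omega)]
        have e2 : walkF N E1 E2 u (K+1-(t+1)) = walkF N E1 E2 u ((K-t-1)+1) := by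
          congr 1; omega
        have e3 : walkF N E1 E2 u ((K-t-1)+1) = arcP N E1 E2 (walkF N E1 E2 u (K-t-1)) := by
          rw [walkF_succ, if_pos (by omega)]
        rw [e1, hprev.2, e2, e3, arcP_invol h1 h2]
        congr 1; omega
      · have e1 : walkF N E1 E2 u (K+(t+1)+1) = glueP N (walkF N E1 E2 u (K+t+1)) := by
          rw [show K+(t+1)+1 = (K+t+1)+1 by omega, walkF_succ, if_neg (by omega)]
        have e2 : walkF N E1 E2 u (K+1-(t+1)) = walkF N E1 E2 u ((K-t-1)+1) := by
          congr 1; omega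
        have e3 : walkF N E1 E2 u ((K-t-1)+1) = glueP N (walkF N E1 E2 u (K-t-1)) := by
          rw [walkF_succ, if_neg (by omega)]
        rw [e1, hprev.2, e2, e3, glueP_invol]
        congr 1; omega
  intro t ht
  rcases Nat.eq_zero_or_pos t with rfl | hpos
  · exact (main 0 (by omega)).1
  · obtain ⟨s, rfl⟩ : ∃ s, t = s + 1 := ⟨t - 1, by omega⟩
    exact (main s (by omega)).2

theorem walk_period (h1 : WBasic N E1) (h2 : WBasic N E2) {u : Bool × ℕ}
    (hu : glueP N u = u) {K : ℕ} (hK1 : K % 2 = 1)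
    (hK2 : glueP N (walkF N E1 E2 u K) = walkF N E1 E2 u K) :
    ∀ j, walkF N E1 E2 u (j + (2*K+2)) = walkF N E1 E2 u j := by
  have hret : walkF N E1 E2 u (2*K+1) = u := by
    have := walk_pal h1 h2 hu hK1 hK2 (K+1) (by omega)
    rw [show K + (K+1) = 2*K+1 by omega, show K+1-(K+1) = 0 by omega] at this
    rw [this, walkF_zero]
  have hret2 : walkF N E1 E2 u (2*K+2) = u := by
    rw [show 2*K+2 = (2*K+1)+1 by omega, walkF_succ, if_neg (by omega), hret, hu]
  intro j
  induction j with
  | zero => rw [Nat.zero_add, hret2, walkF_zero]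
  | succ j ih =>
    rw [show j+1+(2*K+2) = (j+(2*K+2))+1 by omega, walkF_succ, walkF_succ, ih]
    have : (j+(2*K+2)) % 2 = j % 2 := by omega
    rw [this]

theorem index_reduce (h1 : WBasic N E1) (h2 : WBasic N E2) {u : Bool × ℕ}
    (hu : glueP N u = u) {K : ℕ} (hK1 : K % 2 = 1)
    (hK2 : glueP N (walkF N E1 E2 u K) = walkF N E1 E2 u K) :
    ∀ j, ∃ j' ≤ K, walkF N E1 E2 u j' = walkF N E1 E2 u j := by
  intro j
  induction j using Nat.strong_induction_on with
  | _ j ih =>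
    by_cases hj : j ≤ K
    · exact ⟨j, hj, rfl⟩
    by_cases hj2 : j ≤ 2*K+1
    · obtain ⟨t, rfl⟩ : ∃ t, j = K + t := ⟨j - K, by omega⟩
      have := walk_pal h1 h2 hu hK1 hK2 t (by omega)
      exact ⟨K+1-t, by omega, this.symm⟩
    · obtain ⟨j0, rfl⟩ : ∃ j0, j = j0 + (2*K+2) := ⟨j - (2*K+2), by omega⟩
      obtain ⟨j', hj', he⟩ := ih j0 (by omega)
      exact ⟨j', hj', he.trans (walk_period h1 h2 hu hK1 hK2 j0).symm⟩

theorem fixed_unique (h1 : WBasic N E1) (h2 : WBasic N E2) {u y y' : Bool × ℕ}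
    (hu : glueP N u = u) (hy : glueP N y = y) (hy' : glueP N y' = y')
    (hyu : y ≠ u) (hy'u : y' ≠ u)
    (cy : SConn N E1 E2 u y) (cy' : SConn N E1 E2 u y') : y = y' := by
  classical
  obtain ⟨jy, rfl⟩ := comp_in_range h1 h2 hu cy
  obtain ⟨jy', rfl⟩ := comp_in_range h1 h2 hu cy'
  have hS : ∃ k, glueP N (walkF N E1 E2 u k) = walkF N E1 E2 u k ∧
      walkF N E1 E2 u k ≠ u := ⟨jy, hy, hyu⟩
  obtain ⟨K, hPK, hmin⟩ :
      ∃ K, (glueP N (walkF N E1 E2 u K) = walkF N E1 E2 u K ∧ walkF N E1 E2 u K ≠ u) ∧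
        ∀ k, k < K → ¬(glueP N (walkF N E1 E2 u k) = walkF N E1 E2 u k ∧
          walkF N E1 E2 u k ≠ u) :=
    ⟨Nat.find hS, Nat.find_spec hS, fun k hk => Nat.find_min hS hk⟩
  have hKpos : 1 ≤ K := by
    rcases Nat.eq_zero_or_pos K with h0 | h
    · exfalso; rw [h0] at hPK; exact hPK.2 (walkF_zero u)
    · exact h
  have hK1 : K % 2 = 1 := by
    by_contra hpar
    obtain ⟨k', rfl⟩ : ∃ k', K = k' + 1 := ⟨K - 1, by omega⟩
    have hW : walkF N E1 E2 u (k'+1) = glueP N (walkF N E1 E2 u k') := by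
      rw [walkF_succ, if_neg (by omega)]
    have heq : walkF N E1 E2 u k' = walkF N E1 E2 u (k'+1) := by
      have h3 := hPK.1
      rw [hW, glueP_invol] at h3
      rw [hW]
      exact h3
    exact hmin k' (by omega) ⟨by rw [heq]; exact hPK.1, by rw [heq]; exact hPK.2⟩
  have claim : ∀ j, glueP N (walkF N E1 E2 u j) = walkF N E1 E2 u j →
      walkF N E1 E2 u j ≠ u → walkF N E1 E2 u j = walkF N E1 E2 u K := by
    intro j hgj hju
    obtain ⟨j', hj'le, hj'eq⟩ := index_reduce h1 h2 hu hK1 hPK.1 j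
    have hj0 : j' ≠ 0 := by
      rintro rfl
      rw [walkF_zero] at hj'eq
      exact hju hj'eq.symm
    rcases lt_or_eq_of_le hj'le with hlt | heq
    · exfalso
      exact hmin j' hlt ⟨by rw [hj'eq]; exact hgj, by rw [hj'eq]; exact hju⟩
    · rw [← hj'eq, heq]
  rw [claim jy hy hyu, claim jy' hy' hy'u]

theorem sBd_snd (i : ℕ) : (sBd N i).2 = i := by
  unfold sBd; split <;> rfl

theorem sBd_glueP {i : ℕ} (hi : i < 2*N) : glueP N (sBd N i) = sBd N i := by
  by_cases h : i < N
  · rw [show sBd N i = ((false, i) : Bool × ℕ) from if_pos h]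
    exact glueP_fix (by simp; omega) (by simp)
  · rw [show sBd N i = ((true, i) : Bool × ℕ) from if_neg h]
    exact glueP_fix (by simp) (by simp; omega)

theorem bPartner_unique (h1 : WBasic N E1) (h2 : WBasic N E2) {i j j' : ℕ}
    (hi : i < 2*N) (hj : j < 2*N) (hj' : j' < 2*N) (hji : j ≠ i) (hj'i : j' ≠ i)
    (c1 : SConn N E1 E2 (sBd N i) (sBd N j)) (c2 : SConn N E1 E2 (sBd N i) (sBd N j')) :
    j = j' := by
  have h := fixed_unique h1 h2 (sBd_glueP hi) (sBd_glueP hj) (sBd_glueP hj')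
    (fun he => hji (by rw [← sBd_snd (N := N) j, ← sBd_snd (N := N) i, he]))
    (fun he => hj'i (by rw [← sBd_snd (N := N) j', ← sBd_snd (N := N) i, he]))
    c1 c2
  rw [← sBd_snd (N := N) j, ← sBd_snd (N := N) j', h]

theorem no_eEnd (h1 : WBasic N E1) (h2 : WBasic N E2) :
    ∀ y, ¬ isEEnd N E1 E2 y := fun y hy => ld_no_east h1 h2 y hy.2

theorem nWE_zero (h1 : WBasic N E1) (h2 : WBasic N E2) : nWE N E1 E2 = 0 := by
  unfold nWE
  have he : {x : Bool × ℕ | isWEnd N E1 E2 x ∧ ¬ touchesBd N E1 E2 x ∧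
      ∃ y, isEEnd N E1 E2 y ∧ SConn N E1 E2 x y} = ∅ := by
    ext x
    simp only [Set.mem_setOf_eq, Set.mem_empty_iff_false, iff_false]
    rintro ⟨_, _, y, hy, _⟩
    exact no_eEnd h1 h2 y hy
  rw [he, Set.ncard_empty]

end Walk

open Relation

/-- InnerPt points of the big concatenation (those surviving the shrink). -/
def InnerPt (n : ℕ) (x : Bool × ℕ) : Prop := 1 ≤ x.2 ∧ x.2 ≤ 2*n

def tauP (x : Bool × ℕ) : Bool × ℕ := (x.1, x.2 + 1)
def phiP (x : Bool × ℕ) : Bool × ℕ := (x.1, x.2 - 1)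

theorem tauP_phiP {n : ℕ} {x : Bool × ℕ} (h : InnerPt n x) : tauP (phiP x) = x := by
  obtain ⟨b, i⟩ := x
  unfold tauP phiP
  simp only [Prod.mk.injEq, true_and]
  obtain ⟨h1, _⟩ := h
  simp only at h1
  omega

theorem phiP_tauP (x : Bool × ℕ) : phiP (tauP x) = x := rfl

section Transfer

variable {n : ℕ} {D1 D2 : StripDiagram (n+1)}

theorem step_inner (hB1 : WBasic (n+1) D1) (hB2 : WBasic (n+1) D2)
    (hC1 : CupCap (n+1) D1) (hC2 : CupCap (n+1) D2) {x y : Bool × ℕ}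
    (hs : SStep (n+1) D1 D2 x y) : InnerPt n x ↔ InnerPt n y := by
  cases hs with
  | arc1 i j h hd =>
    obtain ⟨hi1, hi2, hj1, hj2, _, _⟩ := pt_bounds hB1 hC1 h hd
    unfold InnerPt; dsimp only; omega
  | arc2 i j h hd =>
    obtain ⟨hi1, hi2, hj1, hj2, _, _⟩ := pt_bounds hB2 hC2 h hd
    unfold InnerPt; dsimp only; omega
  | glue i h1 h2 =>
    unfold InnerPt; dsimp only; omega

theorem step_push (hB1 : WBasic (n+1) D1) (hB2 : WBasic (n+1) D2)
    (hC1 : CupCap (n+1) D1) (hC2 : CupCap (n+1) D2) {x y : Bool × ℕ}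
    (hs : SStep (n+1) D1 D2 x y) (hx : InnerPt n x) :
    SStep n (shrink (n+1) D1) (shrink (n+1) D2) (phiP x) (phiP y) := by
  cases hs with
  | arc1 i j h hd =>
    obtain ⟨hi1, hi2, hj1, hj2, _, _⟩ := pt_bounds hB1 hC1 h hd
    show SStep n (shrink (n+1) D1) (shrink (n+1) D2) (false, i-1) (false, j-1)
    refine SStep.arc1 (i-1) (j-1) (by omega) ?_
    rw [shrink_dest_pt hB1 hC1 (by omega), show i-1+1 = i by omega,
      show j-1+1 = j by omega]
    exact hd
  | arc2 i j h hd =>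
    obtain ⟨hi1, hi2, hj1, hj2, _, _⟩ := pt_bounds hB2 hC2 h hd
    show SStep n (shrink (n+1) D1) (shrink (n+1) D2) (true, i-1) (true, j-1)
    refine SStep.arc2 (i-1) (j-1) (by omega) ?_
    rw [shrink_dest_pt hB2 hC2 (by omega), show i-1+1 = i by omega,
      show j-1+1 = j by omega]
    exact hd
  | glue i h1 h2 =>
    have hi2 : i ≤ 2*n := hx.2
    show SStep n (shrink (n+1) D1) (shrink (n+1) D2) (false, i-1) (true, 2*(n+1)-1-i-1)
    rw [show 2*(n+1)-1-i-1 = 2*n-1-(i-1) by omega]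
    exact SStep.glue (i-1) (by omega) (by omega)

theorem step_pull (hB1 : WBasic (n+1) D1) (hB2 : WBasic (n+1) D2)
    (hC1 : CupCap (n+1) D1) (hC2 : CupCap (n+1) D2) {x y : Bool × ℕ}
    (hs : SStep n (shrink (n+1) D1) (shrink (n+1) D2) x y) :
    SStep (n+1) D1 D2 (tauP x) (tauP y) := by
  cases hs with
  | arc1 i j h hd =>
    show SStep (n+1) D1 D2 (false, i+1) (false, j+1)
    exact SStep.arc1 (i+1) (j+1) (by omega) ((shrink_dest_pt hB1 hC1 h).mp hd)
  | arc2 i j h hd =>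
    show SStep (n+1) D1 D2 (true, i+1) (true, j+1)
    exact SStep.arc2 (i+1) (j+1) (by omega) ((shrink_dest_pt hB2 hC2 h).mp hd)
  | glue i hg1 hg2 =>
    show SStep (n+1) D1 D2 (false, i+1) (true, 2*n-1-i+1)
    rw [show 2*n-1-i+1 = 2*(n+1)-1-(i+1) by omega]
    exact SStep.glue (i+1) (by omega) (by omega)

variable (hB1 : WBasic (n+1) D1) (hB2 : WBasic (n+1) D2)
    (hC1 : CupCap (n+1) D1) (hC2 : CupCap (n+1) D2)

include hB1 hB2 hC1 hC2

theorem conn_push {x y : Bool × ℕ} (hc : SConn (n+1) D1 D2 x y) :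
    (InnerPt n x ↔ InnerPt n y) ∧
      (InnerPt n x → SConn n (shrink (n+1) D1) (shrink (n+1) D2) (phiP x) (phiP y)) := by
  induction hc with
  | rel a b hr =>
    exact ⟨step_inner hB1 hB2 hC1 hC2 hr,
      fun hx => EqvGen.rel _ _ (step_push hB1 hB2 hC1 hC2 hr hx)⟩
  | refl a => exact ⟨Iff.rfl, fun _ => EqvGen.refl _⟩
  | symm a b _ ih =>
    exact ⟨ih.1.symm, fun hb => EqvGen.symm _ _ (ih.2 (ih.1.mpr hb))⟩
  | trans a b c _ _ ih1 ih2 =>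
    exact ⟨ih1.1.trans ih2.1,
      fun ha => EqvGen.trans _ _ _ (ih1.2 ha) (ih2.2 (ih1.1.mp ha))⟩

theorem conn_pull {x y : Bool × ℕ}
    (hc : SConn n (shrink (n+1) D1) (shrink (n+1) D2) x y) :
    SConn (n+1) D1 D2 (tauP x) (tauP y) := by
  induction hc with
  | rel a b hr => exact EqvGen.rel _ _ (step_pull hB1 hB2 hC1 hC2 hr)
  | refl a => exact EqvGen.refl _
  | symm a b _ ih => exact EqvGen.symm _ _ ih
  | trans a b c _ _ ih1 ih2 => exact EqvGen.trans _ _ _ ih1 ih2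

/-- No step of the big concatenation touches the isolated west corner `(false, 0)`. -/
theorem step_corner_a {x y : Bool × ℕ} (hs : SStep (n+1) D1 D2 x y) :
    (x = ((false, 0) : Bool × ℕ)) ↔ (y = ((false, 0) : Bool × ℕ)) := by
  cases hs with
  | arc1 i j h hd =>
    obtain ⟨hi1, hi2, hj1, hj2, _, _⟩ := pt_bounds hB1 hC1 h hd
    simp [Prod.ext_iff] <;> omega
  | arc2 i j h hd =>
    simp [Prod.ext_iff]
  | glue i h1 h2 =>
    simp [Prod.ext_iff] <;> omega

theorem step_corner_z {x y : Bool × ℕ} (hs : SStep (n+1) D1 D2 x y) :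
    (x = ((true, 2*n+1) : Bool × ℕ)) ↔ (y = ((true, 2*n+1) : Bool × ℕ)) := by
  cases hs with
  | arc1 i j h hd =>
    simp [Prod.ext_iff]
  | arc2 i j h hd =>
    obtain ⟨hi1, hi2, hj1, hj2, _, _⟩ := pt_bounds hB2 hC2 h hd
    simp [Prod.ext_iff] <;> omega
  | glue i h1 h2 =>
    simp [Prod.ext_iff] <;> omega

/-- The centre pair: `(false, 2n+1)` (bottom of `D1` next to the wall) and `(true, 0)`. -/
theorem step_centre {x y : Bool × ℕ} (hs : SStep (n+1) D1 D2 x y) :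
    (x = ((false, 2*n+1) : Bool × ℕ) ∨ x = ((true, 0) : Bool × ℕ)) ↔
    (y = ((false, 2*n+1) : Bool × ℕ) ∨ y = ((true, 0) : Bool × ℕ)) := by
  cases hs with
  | arc1 i j h hd =>
    obtain ⟨hi1, hi2, hj1, hj2, _, _⟩ := pt_bounds hB1 hC1 h hd
    simp [Prod.ext_iff] <;> omega
  | arc2 i j h hd =>
    obtain ⟨hi1, hi2, hj1, hj2, _, _⟩ := pt_bounds hB2 hC2 h hd
    simp [Prod.ext_iff] <;> omega
  | glue i h1 h2 =>
    simp [Prod.ext_iff] <;> omega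

theorem conn_corner_a {y : Bool × ℕ} (hc : SConn (n+1) D1 D2 ((false, 0) : Bool × ℕ) y) :
    y = ((false, 0) : Bool × ℕ) := by
  have := eqvGen_class (fun x => x = ((false, 0) : Bool × ℕ))
    (fun x y hs => step_corner_a hB1 hB2 hC1 hC2 hs) _ _ hc
  exact this.mp rfl

theorem conn_corner_z {y : Bool × ℕ}
    (hc : SConn (n+1) D1 D2 ((true, 2*n+1) : Bool × ℕ) y) :
    y = ((true, 2*n+1) : Bool × ℕ) := by
  have := eqvGen_class (fun x => x = ((true, 2*n+1) : Bool × ℕ))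
    (fun x y hs => step_corner_z hB1 hB2 hC1 hC2 hs) _ _ hc
  exact this.mp rfl

theorem conn_centre {x y : Bool × ℕ} (hc : SConn (n+1) D1 D2 x y) :
    ((x = ((false, 2*n+1) : Bool × ℕ) ∨ x = ((true, 0) : Bool × ℕ)) ↔
     (y = ((false, 2*n+1) : Bool × ℕ) ∨ y = ((true, 0) : Bool × ℕ))) :=
  eqvGen_class _ (fun x y hs => step_centre hB1 hB2 hC1 hC2 hs) _ _ hc

theorem conn_inner {x y : Bool × ℕ} (hc : SConn (n+1) D1 D2 x y) :
    InnerPt n x ↔ InnerPt n y :=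
  (conn_push hB1 hB2 hC1 hC2 hc).1

end Transfer

theorem ldest_false {N : ℕ} {E1 E2 : StripDiagram N} (i : ℕ) :
    ldest N E1 E2 (false, i) = E1.dest i := rfl

theorem ldest_true {N : ℕ} {E1 E2 : StripDiagram N} (i : ℕ) :
    ldest N E1 E2 (true, i) = E2.dest i := rfl

theorem sBd_lt {N i : ℕ} (h : i < N) : sBd N i = ((false, i) : Bool × ℕ) := if_pos h

theorem sBd_ge {N i : ℕ} (h : ¬ i < N) : sBd N i = ((true, i) : Bool × ℕ) := if_neg h

theorem sBd_phi {n i : ℕ} (h1 : 1 ≤ i) (h2 : i ≤ 2*n) :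
    phiP (sBd (n+1) i) = sBd n (i-1) := by
  by_cases h : i < n+1
  · rw [sBd_lt h, sBd_lt (show i-1 < n by omega)]; rfl
  · rw [sBd_ge h, sBd_ge (show ¬ i-1 < n by omega)]; rfl

theorem sBd_tau {n j : ℕ} : tauP (sBd n j) = sBd (n+1) (j+1) := by
  by_cases h' : j < n
  · rw [sBd_lt h', sBd_lt (show j+1 < n+1 by omega)]; rfl
  · rw [sBd_ge h', sBd_ge (show ¬ j+1 < n+1 by omega)]; rfl

theorem innerPt_sBd {n i : ℕ} (h1 : 1 ≤ i) (h2 : i ≤ 2*n) : InnerPt n (sBd (n+1) i) := by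
  refine ⟨?_, ?_⟩ <;> rw [sBd_snd] <;> omega

section Transfer2

variable {n : ℕ} {D1 D2 : StripDiagram (n+1)}
variable (hB1 : WBasic (n+1) D1) (hB2 : WBasic (n+1) D2)
    (hC1 : CupCap (n+1) D1) (hC2 : CupCap (n+1) D2)

include hB1 hB2 hC1 hC2

theorem wEnd_phi {x : Bool × ℕ} (hx : InnerPt n x) :
    isWEnd (n+1) D1 D2 x ↔ isWEnd n (shrink (n+1) D1) (shrink (n+1) D2) (phiP x) := by
  obtain ⟨b, i⟩ := x
  obtain ⟨hx1, hx2⟩ := hx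
  simp only at hx1 hx2
  have e : i - 1 + 1 = i := by omega
  have hph : phiP ((b, i) : Bool × ℕ) = ((b, i-1) : Bool × ℕ) := rfl
  rw [hph]
  unfold isWEnd
  dsimp only
  cases b
  · rw [ldest_false, ldest_false, shrink_dest_west (show i-1 < 2*n by omega), e]
    constructor
    · rintro ⟨_, h⟩; exact ⟨by omega, h⟩
    · rintro ⟨_, h⟩; exact ⟨by omega, h⟩
  · rw [ldest_true, ldest_true, shrink_dest_west (show i-1 < 2*n by omega), e]
    constructor
    · rintro ⟨_, h⟩; exact ⟨by omega, h⟩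
    · rintro ⟨_, h⟩; exact ⟨by omega, h⟩

theorem wconn_iff {x : Bool × ℕ} (hx : InnerPt n x) :
    (∃ y, isWEnd (n+1) D1 D2 y ∧ SConn (n+1) D1 D2 x y) ↔
    (∃ y', isWEnd n (shrink (n+1) D1) (shrink (n+1) D2) y' ∧
      SConn n (shrink (n+1) D1) (shrink (n+1) D2) (phiP x) y') := by
  constructor
  · rintro ⟨y, hw, hc⟩
    have hyI : InnerPt n y := (conn_inner hB1 hB2 hC1 hC2 hc).mp hx
    exact ⟨phiP y, (wEnd_phi hB1 hB2 hC1 hC2 hyI).mp hw,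
      (conn_push hB1 hB2 hC1 hC2 hc).2 hx⟩
  · rintro ⟨y', hw', hc'⟩
    have hy2 : y'.2 < 2*n := hw'.1
    have hyI : InnerPt n (tauP y') :=
      ⟨by show 1 ≤ y'.2 + 1; omega, by show y'.2 + 1 ≤ 2*n; omega⟩
    refine ⟨tauP y', ?_, ?_⟩
    · rw [wEnd_phi hB1 hB2 hC1 hC2 hyI, phiP_tauP]
      exact hw'
    · have := conn_pull hB1 hB2 hC1 hC2 hc'
      rwa [tauP_phiP hx] at this

theorem touches_iff {x : Bool × ℕ} (hx : InnerPt n x) :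
    touchesBd (n+1) D1 D2 x ↔
      touchesBd n (shrink (n+1) D1) (shrink (n+1) D2) (phiP x) := by
  constructor
  · rintro ⟨i, hi, hc⟩
    have hiI : InnerPt n (sBd (n+1) i) := (conn_inner hB1 hB2 hC1 hC2 hc).mp hx
    obtain ⟨ha, hb⟩ := hiI
    rw [sBd_snd] at ha hb
    refine ⟨i-1, by omega, ?_⟩
    have := (conn_push hB1 hB2 hC1 hC2 hc).2 hx
    rwa [sBd_phi ha hb] at this
  · rintro ⟨i', hi', hc'⟩
    refine ⟨i'+1, by omega, ?_⟩
    have := conn_pull hB1 hB2 hC1 hC2 hc'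
    rwa [tauP_phiP hx, sBd_tau] at this

theorem wall_iff {x : Bool × ℕ} (hx : InnerPt n x) :
    (∃ y, (isWEnd (n+1) D1 D2 y ∨ isEEnd (n+1) D1 D2 y) ∧ SConn (n+1) D1 D2 x y) ↔
    (∃ y', (isWEnd n (shrink (n+1) D1) (shrink (n+1) D2) y' ∨
        isEEnd n (shrink (n+1) D1) (shrink (n+1) D2) y') ∧
      SConn n (shrink (n+1) D1) (shrink (n+1) D2) (phiP x) y') := by
  have hE1 := shrink_wBasic hB1 hC1
  have hE2 := shrink_wBasic hB2 hC2
  constructor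
  · rintro ⟨y, hor, hc⟩
    rcases hor with hw | he
    · obtain ⟨y', h1', h2'⟩ := (wconn_iff hB1 hB2 hC1 hC2 hx).mp ⟨y, hw, hc⟩
      exact ⟨y', Or.inl h1', h2'⟩
    · exact absurd he (no_eEnd hB1 hB2 y)
  · rintro ⟨y', hor, hc'⟩
    rcases hor with hw | he
    · obtain ⟨y, h1', h2'⟩ := (wconn_iff hB1 hB2 hC1 hC2 hx).mpr ⟨y', hw, hc'⟩
      exact ⟨y, Or.inl h1', h2'⟩
    · exact absurd he (no_eEnd hE1 hE2 y')

end Transfer2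

theorem compDest_hi (N : ℕ) (A B : StripDiagram N) {i : ℕ} (h : ¬ i < 2*N) :
    compDest N A B i = SDest.pt i := by
  unfold compDest; rw [if_neg h]

theorem compDest_pt_eq (N : ℕ) (A B : StripDiagram N) {i : ℕ} (h : i < 2*N)
    (hex : ∃ j, j < 2*N ∧ j ≠ i ∧ SConn N A B (sBd N i) (sBd N j)) :
    compDest N A B i = SDest.pt (Classical.choose hex) := by
  unfold compDest; rw [if_pos h, dif_pos hex]

theorem compDest_west_eq (N : ℕ) (A B : StripDiagram N) {i : ℕ} (h : i < 2*N)
    (hno : ¬ ∃ j, j < 2*N ∧ j ≠ i ∧ SConn N A B (sBd N i) (sBd N j))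
    (hw : ∃ y, isWEnd N A B y ∧ SConn N A B (sBd N i) y) :
    compDest N A B i = SDest.west := by
  unfold compDest; rw [if_pos h, dif_neg hno, if_pos hw]

theorem compDest_east_eq (N : ℕ) (A B : StripDiagram N) {i : ℕ} (h : i < 2*N)
    (hno : ¬ ∃ j, j < 2*N ∧ j ≠ i ∧ SConn N A B (sBd N i) (sBd N j))
    (hnw : ¬ ∃ y, isWEnd N A B y ∧ SConn N A B (sBd N i) y) :
    compDest N A B i = SDest.east := by
  unfold compDest; rw [if_pos h, dif_neg hno, if_neg hnw]

section CompShrink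

variable {n : ℕ} {D1 D2 : StripDiagram (n+1)}
variable (hB1 : WBasic (n+1) D1) (hB2 : WBasic (n+1) D2)
    (hC1 : CupCap (n+1) D1) (hC2 : CupCap (n+1) D2)

include hB1 hB2 hC1 hC2

theorem comp_shrink :
    shrink (n+1) (compStrip (n+1) D1 D2) =
      compStrip n (shrink (n+1) D1) (shrink (n+1) D2) := by
  have hE1 := shrink_wBasic hB1 hC1
  have hE2 := shrink_wBasic hB2 hC2
  apply StripDiagram.ext'
  · intro x
    by_cases hx : x < 2*n
    · rw [shrink_dest_of_lt hx]
      have hiI : InnerPt n (sBd (n+1) (x+1)) := innerPt_sBd (by omega) (by omega)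
      have hphi : phiP (sBd (n+1) (x+1)) = sBd n x := by
        rw [sBd_phi (by omega) (by omega), show x+1-1 = x by omega]
      by_cases hp : ∃ j', j' < 2*n ∧ j' ≠ x ∧
          SConn n (shrink (n+1) D1) (shrink (n+1) D2) (sBd n x) (sBd n j')
      · have hPbig : ∃ j, j < 2*(n+1) ∧ j ≠ x+1 ∧
            SConn (n+1) D1 D2 (sBd (n+1) (x+1)) (sBd (n+1) j) := by
          obtain ⟨j', hj1, hj2, hj3⟩ := hp
          refine ⟨j'+1, by omega, by omega, ?_⟩
          have := conn_pull hB1 hB2 hC1 hC2 hj3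
          rwa [sBd_tau, sBd_tau] at this
        have e : (compStrip (n+1) D1 D2).dest (x+1)
            = SDest.pt (Classical.choose hPbig) :=
          compDest_pt_eq (n+1) D1 D2 (by omega) hPbig
        have e' : (compStrip n (shrink (n+1) D1) (shrink (n+1) D2)).dest x
            = SDest.pt (Classical.choose hp) :=
          compDest_pt_eq n _ _ (by omega) hp
        rw [e, e']
        show SDest.pt (Classical.choose hPbig - 1) = SDest.pt (Classical.choose hp)
        congr 1
        obtain ⟨hb1, hb2, hb3⟩ := Classical.choose_spec hPbig
        obtain ⟨hs1, hs2, hs3⟩ := Classical.choose_spec hp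
        have hjI : InnerPt n (sBd (n+1) (Classical.choose hPbig)) :=
          (conn_inner hB1 hB2 hC1 hC2 hb3).mp hiI
        obtain ⟨ha, hbb⟩ := hjI
        rw [sBd_snd] at ha hbb
        have hsmall := (conn_push hB1 hB2 hC1 hC2 hb3).2 hiI
        rw [hphi, sBd_phi ha hbb] at hsmall
        exact bPartner_unique hE1 hE2 (by omega) (by omega) hs1 (by omega) hs2
          hsmall hs3
      · have hPbig : ¬ ∃ j, j < 2*(n+1) ∧ j ≠ x+1 ∧
            SConn (n+1) D1 D2 (sBd (n+1) (x+1)) (sBd (n+1) j) := by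
          rintro ⟨j, hj1, hj2, hj3⟩
          apply hp
          have hjI : InnerPt n (sBd (n+1) j) := (conn_inner hB1 hB2 hC1 hC2 hj3).mp hiI
          obtain ⟨ha, hbb⟩ := hjI
          rw [sBd_snd] at ha hbb
          refine ⟨j-1, by omega, by omega, ?_⟩
          have := (conn_push hB1 hB2 hC1 hC2 hj3).2 hiI
          rwa [hphi, sBd_phi ha hbb] at this
        by_cases hw : ∃ y', isWEnd n (shrink (n+1) D1) (shrink (n+1) D2) y' ∧
            SConn n (shrink (n+1) D1) (shrink (n+1) D2) (sBd n x) y'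
        · have hwbig : ∃ y, isWEnd (n+1) D1 D2 y ∧
              SConn (n+1) D1 D2 (sBd (n+1) (x+1)) y := by
            apply (wconn_iff hB1 hB2 hC1 hC2 hiI).mpr
            rwa [hphi]
          have e : (compStrip (n+1) D1 D2).dest (x+1) = SDest.west :=
            compDest_west_eq (n+1) D1 D2 (by omega) hPbig hwbig
          have e' : (compStrip n (shrink (n+1) D1) (shrink (n+1) D2)).dest x
              = SDest.west :=
            compDest_west_eq n _ _ (by omega) hp hw
          rw [e, e']
        · have hnwbig : ¬ ∃ y, isWEnd (n+1) D1 D2 y ∧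
              SConn (n+1) D1 D2 (sBd (n+1) (x+1)) y := by
            intro h
            apply hw
            have := (wconn_iff hB1 hB2 hC1 hC2 hiI).mp h
            rwa [hphi] at this
          have e : (compStrip (n+1) D1 D2).dest (x+1) = SDest.east :=
            compDest_east_eq (n+1) D1 D2 (by omega) hPbig hnwbig
          have e' : (compStrip n (shrink (n+1) D1) (shrink (n+1) D2)).dest x
              = SDest.east :=
            compDest_east_eq n _ _ (by omega) hp hw
          rw [e, e']
    · rw [shrink_dest_of_ge (by omega)]
      exact (compDest_hi n _ _ (by omega)).symm
  · show (0:ℕ) = _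
    have hb : (compStrip n (shrink (n+1) D1) (shrink (n+1) D2)).belts
        = (0 + 0 + nWE n (shrink (n+1) D1) (shrink (n+1) D2)) % 2 := rfl
    rw [hb, nWE_zero (shrink_wBasic hB1 hC1) (shrink_wBasic hB2 hC2)]

end CompShrink

set_option linter.unusedSectionVars false

open Relation

theorem even_card_of_invol (f : ℕ → ℕ) :
    ∀ s : Finset ℕ, (∀ i ∈ s, f i ∈ s ∧ f i ≠ i ∧ f (f i) = i) → Even s.card := by
  classical
  intro s
  induction s using Finset.strongInduction with
  | _ s ih =>
    intro hf
    rcases s.eq_empty_or_nonempty with rfl | ⟨a, ha⟩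
    · simp
    · obtain ⟨hfa, hne, hff⟩ := hf a ha
      set s' := (s.erase a).erase (f a) with hs'
      have hsub : s' ⊂ s := by
        apply Finset.ssubset_of_subset_of_ssubset
        · exact Finset.erase_subset _ _
        · exact Finset.erase_ssubset ha
      have hmem : ∀ i ∈ s', f i ∈ s' ∧ f i ≠ i ∧ f (f i) = i := by
        intro i hi
        have his : i ∈ s := Finset.mem_of_mem_erase (Finset.mem_of_mem_erase hi)
        obtain ⟨h1, h2, h3⟩ := hf i his
        have hia : i ≠ a := by
          intro h; rw [h] at hi
          exact (Finset.notMem_erase _ _) (Finset.mem_of_mem_erase (by rw [hs'] at hi; exact hi))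
        have hifa : i ≠ f a := by
          intro h; rw [hs'] at hi; rw [h] at hi
          exact (Finset.notMem_erase _ _) hi
        refine ⟨?_, h2, h3⟩
        rw [hs']
        apply Finset.mem_erase_of_ne_of_mem
        · intro h; apply hia; rw [← h3, h, hff]
        · apply Finset.mem_erase_of_ne_of_mem
          · intro h; apply hifa; rw [← h3, h]
          · exact h1
      have hcard : s.card = s'.card + 2 := by
        rw [hs']
        rw [Finset.card_erase_of_mem (Finset.mem_erase_of_ne_of_mem hne hfa),
          Finset.card_erase_of_mem ha]
        have h2 : 2 ≤ s.card := by
          have := Finset.one_lt_card.mpr ⟨a, ha, f a, hfa, fun h => hne h.symm⟩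
          omega
        omega
      obtain ⟨k, hk⟩ := ih s' hsub hmem
      exact ⟨k + 1, by omega⟩

theorem west_index_even {N : ℕ} {E : StripDiagram N} (hE : WBasic N E) :
    Even ({i : ℕ | i < 2*N ∧ E.dest i = SDest.west}.ncard) := by
  classical
  set Fw : Finset ℕ := (Finset.range (2*N)).filter (fun i => E.dest i = SDest.west) with hFw
  have hset : {i : ℕ | i < 2*N ∧ E.dest i = SDest.west} = ↑Fw := by
    ext i
    simp [hFw, Finset.mem_filter, Finset.mem_range]
  rw [hset, Set.ncard_coe_finset]
  set Fp : Finset ℕ := (Finset.range (2*N)).filter (fun i => ¬ E.dest i = SDest.west)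
    with hFp
  have hsum : Fw.card + Fp.card = 2*N := by
    rw [hFw, hFp]
    rw [Finset.card_filter_add_card_filter_not]
    exact Finset.card_range _
  have hpt : ∀ i ∈ Fp, ∃ j, E.dest i = SDest.pt j := by
    intro i hi
    rw [hFp, Finset.mem_filter] at hi
    rcases hd : E.dest i with j | _ | _
    · exact ⟨j, rfl⟩
    · exact absurd hd hi.2
    · exact absurd hd (hE.2.2 i)
  set f : ℕ → ℕ := fun i => match E.dest i with
    | SDest.pt j => j
    | _ => i with hf
  have hinv : ∀ i ∈ Fp, f i ∈ Fp ∧ f i ≠ i ∧ f (f i) = i := by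
    intro i hi
    have hi' := hi
    rw [hFp, Finset.mem_filter, Finset.mem_range] at hi'
    obtain ⟨j, hj⟩ := hpt i hi
    have hfi : f i = j := by rw [hf]; simp only; rw [hj]
    obtain ⟨hj1, hj2, hj3⟩ := hE.1.2.1 i j hi'.1 hj
    have hfj : f j = i := by rw [hf]; simp only; rw [hj3]
    refine ⟨?_, by rw [hfi]; exact hj2, by rw [hfi, hfj]⟩
    rw [hfi, hFp, Finset.mem_filter, Finset.mem_range]
    exact ⟨hj1, by rw [hj3]; simp⟩
  obtain ⟨k, hk⟩ := even_card_of_invol f Fp hinv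
  exact ⟨N - k, by omega⟩

theorem tauP_inj : Function.Injective tauP := by
  intro x y h
  obtain ⟨bx, ix⟩ := x
  obtain ⟨by', iy⟩ := y
  simp only [tauP, Prod.mk.injEq] at h ⊢
  exact ⟨h.1, by omega⟩

theorem finite_of_bound {S : Set (Bool × ℕ)} (k : ℕ) (h : ∀ x ∈ S, x.2 < k) :
    S.Finite := by
  apply Set.Finite.subset ((Set.finite_univ (α := Bool)).prod (Set.finite_Iio k))
  intro x hx
  exact Set.mem_prod.mpr ⟨trivial, h x hx⟩

theorem classify_pt {n : ℕ} {x : Bool × ℕ} (h : x.2 < 2*(n+1)) :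
    x = ((false,0) : Bool × ℕ) ∨ x = ((false,2*n+1) : Bool × ℕ) ∨
      x = ((true,0) : Bool × ℕ) ∨ x = ((true,2*n+1) : Bool × ℕ) ∨ InnerPt n x := by
  obtain ⟨b, i⟩ := x
  simp only at h
  by_cases h0 : i = 0
  · subst h0; cases b
    · exact Or.inl rfl
    · exact Or.inr (Or.inr (Or.inl rfl))
  · by_cases ht : i = 2*n+1
    · subst ht; cases b
      · exact Or.inr (Or.inl rfl)
      · exact Or.inr (Or.inr (Or.inr (Or.inl rfl)))
    · refine Or.inr (Or.inr (Or.inr (Or.inr ⟨?_, ?_⟩)))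
      · show 1 ≤ i; omega
      · show i ≤ 2*n; omega

theorem lexLt_tau (x y : Bool × ℕ) : lexLt (tauP x) (tauP y) ↔ lexLt x y := by
  obtain ⟨bx, ix⟩ := x
  obtain ⟨by', iy⟩ := y
  cases bx <;> cases by' <;> simp [lexLt, tauP]

theorem lexLt_pair {b1 b2 : Bool} {i1 i2 : ℕ} :
    lexLt (b1, i1) (b2, i2) ↔ ((b1 = false ∧ b2 = true) ∨ (b1 = b2 ∧ i1 < i2)) :=
  Iff.rfl

section Counts

variable {n : ℕ} {D1 D2 : StripDiagram (n+1)}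
variable (hB1 : WBasic (n+1) D1) (hB2 : WBasic (n+1) D2)
    (hC1 : CupCap (n+1) D1) (hC2 : CupCap (n+1) D2)

include hB1 hB2 hC1 hC2

theorem wEnd_a : isWEnd (n+1) D1 D2 ((false, 0) : Bool × ℕ) :=
  ⟨show (0:ℕ) < 2*(n+1) by omega, by rw [ldest_false]; exact hC1.1⟩

theorem wEnd_bb : isWEnd (n+1) D1 D2 ((false, 2*n+1) : Bool × ℕ) := by
  refine ⟨show 2*n+1 < 2*(n+1) by omega, ?_⟩
  rw [ldest_false]
  have := hC1.2
  rwa [show 2*(n+1)-1 = 2*n+1 by omega] at this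

theorem wEnd_cc : isWEnd (n+1) D1 D2 ((true, 0) : Bool × ℕ) :=
  ⟨show (0:ℕ) < 2*(n+1) by omega, by rw [ldest_true]; exact hC2.1⟩

theorem wEnd_z : isWEnd (n+1) D1 D2 ((true, 2*n+1) : Bool × ℕ) := by
  refine ⟨show 2*n+1 < 2*(n+1) by omega, ?_⟩
  rw [ldest_true]
  have := hC2.2
  rwa [show 2*(n+1)-1 = 2*n+1 by omega] at this

theorem touches_a : touchesBd (n+1) D1 D2 ((false, 0) : Bool × ℕ) :=
  ⟨0, by omega, by rw [sBd_lt (show 0 < n+1 by omega)]; exact EqvGen.refl _⟩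

theorem touches_z : touchesBd (n+1) D1 D2 ((true, 2*n+1) : Bool × ℕ) :=
  ⟨2*n+1, by omega, by rw [sBd_ge (show ¬ 2*n+1 < n+1 by omega)]; exact EqvGen.refl _⟩

theorem not_touches_bb : ¬ touchesBd (n+1) D1 D2 ((false, 2*n+1) : Bool × ℕ) := by
  rintro ⟨i, hi, hc⟩
  have := (conn_centre hB1 hB2 hC1 hC2 hc).mp (Or.inl rfl)
  rcases this with hEq | hEq
  · have h2 := congrArg Prod.snd hEq
    rw [sBd_snd] at h2
    subst h2
    rw [sBd_ge (show ¬ 2*n+1 < n+1 by omega)] at hEq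
    exact Bool.noConfusion (congrArg Prod.fst hEq)
  · have h2 := congrArg Prod.snd hEq
    rw [sBd_snd] at h2
    subst h2
    rw [sBd_lt (show 0 < n+1 by omega)] at hEq
    exact Bool.noConfusion (congrArg Prod.fst hEq)

theorem conn_bb_cc :
    SConn (n+1) D1 D2 ((false, 2*n+1) : Bool × ℕ) ((true, 0) : Bool × ℕ) := by
  have h := SStep.glue (m := n+1) (D1 := D1) (D2 := D2) (2*n+1) (by omega) (by omega)
  rw [show 2*(n+1)-1-(2*n+1) = 0 by omega] at h
  exact EqvGen.rel _ _ h

theorem wwtop_bb : isWWTop (n+1) D1 D2 ((false, 2*n+1) : Bool × ℕ) := by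
  refine ⟨wEnd_bb hB1 hB2 hC1 hC2, not_touches_bb hB1 hB2 hC1 hC2, ?_, ?_⟩
  · rintro ⟨y, hy, _⟩
    exact no_eEnd hB1 hB2 y hy
  · intro y hy hc hlex
    have := (conn_centre hB1 hB2 hC1 hC2 hc).mp (Or.inl rfl)
    rcases this with rfl | rfl
    · simp [lexLt] at hlex
    · simp [lexLt] at hlex

theorem top_classify {x : Bool × ℕ} (hx : isWWTop (n+1) D1 D2 x) :
    x = ((false, 2*n+1) : Bool × ℕ) ∨ InnerPt n x := by
  rcases classify_pt (n := n) hx.1.1 with rfl | rfl | rfl | rfl | hI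
  · exact absurd (touches_a hB1 hB2 hC1 hC2) hx.2.1
  · exact Or.inl rfl
  · exfalso
    refine hx.2.2.2 ((false, 2*n+1) : Bool × ℕ) (wEnd_bb hB1 hB2 hC1 hC2)
      (EqvGen.symm _ _ (conn_bb_cc hB1 hB2 hC1 hC2)) ?_
    exact Or.inl ⟨rfl, rfl⟩
  · exact absurd (touches_z hB1 hB2 hC1 hC2) hx.2.1
  · exact Or.inr hI

theorem wwtop_inner_iff {x : Bool × ℕ} (hx : InnerPt n x) :
    isWWTop (n+1) D1 D2 x ↔
      isWWTop n (shrink (n+1) D1) (shrink (n+1) D2) (phiP x) := by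
  have hE1 := shrink_wBasic hB1 hC1
  have hE2 := shrink_wBasic hB2 hC2
  constructor
  · rintro ⟨h1', h2', h3', h4'⟩
    refine ⟨(wEnd_phi hB1 hB2 hC1 hC2 hx).mp h1',
      fun ht => h2' ((touches_iff hB1 hB2 hC1 hC2 hx).mpr ht), ?_, ?_⟩
    · rintro ⟨y', hy', _⟩
      exact no_eEnd hE1 hE2 y' hy'
    · intro y' hy' hc' hlex'
      have hyI : InnerPt n (tauP y') :=
        ⟨show 1 ≤ y'.2+1 by omega, show y'.2+1 ≤ 2*n by have := hy'.1; omega⟩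
      refine h4' (tauP y') ((wEnd_phi hB1 hB2 hC1 hC2 hyI).mpr
          (by rw [phiP_tauP]; exact hy'))
        (by have := conn_pull hB1 hB2 hC1 hC2 hc'; rwa [tauP_phiP hx] at this) ?_
      rw [show x = tauP (phiP x) from (tauP_phiP hx).symm, lexLt_tau]
      exact hlex'
  · rintro ⟨h1', h2', h3', h4'⟩
    refine ⟨(wEnd_phi hB1 hB2 hC1 hC2 hx).mpr h1',
      fun ht => h2' ((touches_iff hB1 hB2 hC1 hC2 hx).mp ht), ?_, ?_⟩
    · rintro ⟨y, hy, _⟩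
      exact no_eEnd hB1 hB2 y hy
    · intro y hy hc hlex
      have hyI : InnerPt n y := (conn_inner hB1 hB2 hC1 hC2 hc).mp hx
      refine h4' (phiP y) ((wEnd_phi hB1 hB2 hC1 hC2 hyI).mp hy)
        ((conn_push hB1 hB2 hC1 hC2 hc).2 hx) ?_
      rw [← lexLt_tau, tauP_phiP hyI, tauP_phiP hx]
      exact hlex

theorem bigWEnd_iff {w : Bool × ℕ} :
    isWEnd (n+1) D1 D2 w ↔
      (w = ((false,0) : Bool × ℕ) ∨ w = ((false,2*n+1) : Bool × ℕ) ∨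
       w = ((true,0) : Bool × ℕ) ∨ w = ((true,2*n+1) : Bool × ℕ) ∨
       (InnerPt n w ∧ isWEnd n (shrink (n+1) D1) (shrink (n+1) D2) (phiP w))) := by
  constructor
  · intro hw
    rcases classify_pt (n := n) hw.1 with rfl | rfl | rfl | rfl | hI
    · exact Or.inl rfl
    · exact Or.inr (Or.inl rfl)
    · exact Or.inr (Or.inr (Or.inl rfl))
    · exact Or.inr (Or.inr (Or.inr (Or.inl rfl)))
    · exact Or.inr (Or.inr (Or.inr (Or.inr
        ⟨hI, (wEnd_phi hB1 hB2 hC1 hC2 hI).mp hw⟩)))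
  · rintro (rfl | rfl | rfl | rfl | ⟨hI, hw⟩)
    · exact wEnd_a hB1 hB2 hC1 hC2
    · exact wEnd_bb hB1 hB2 hC1 hC2
    · exact wEnd_cc hB1 hB2 hC1 hC2
    · exact wEnd_z hB1 hB2 hC1 hC2
    · exact (wEnd_phi hB1 hB2 hC1 hC2 hI).mpr hw

theorem smallWEnd_layer_false {y' : Bool × ℕ}
    (hy' : isWEnd n (shrink (n+1) D1) (shrink (n+1) D2) y') : y'.2 < 2*n := hy'.1

theorem wRank_tau_false {q : ℕ}
    (hq : isWEnd n (shrink (n+1) D1) (shrink (n+1) D2) ((false, q) : Bool × ℕ)) :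
    wRank (n+1) D1 D2 (tauP ((false, q) : Bool × ℕ))
      = wRank n (shrink (n+1) D1) (shrink (n+1) D2) ((false, q) : Bool × ℕ) + 1 := by
  have hq2 : q < 2*n := hq.1
  unfold wRank
  have hset : {y | isWEnd (n+1) D1 D2 y ∧ lexLt y (tauP ((false, q) : Bool × ℕ))}
      = insert ((false,0) : Bool × ℕ)
        (tauP '' {y | isWEnd n (shrink (n+1) D1) (shrink (n+1) D2) y ∧
          lexLt y ((false, q) : Bool × ℕ)}) := by
    ext w
    simp only [Set.mem_insert_iff, Set.mem_image, Set.mem_setOf_eq]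
    constructor
    · rintro ⟨hw, hlex⟩
      have hl : w.1 = false ∧ w.2 < q + 1 := by
        rcases hlex with ⟨_, hcon⟩ | ⟨h1', h2'⟩
        · exact absurd hcon (by simp [tauP])
        · exact ⟨h1', h2'⟩
      rcases (bigWEnd_iff hB1 hB2 hC1 hC2).mp hw with rfl | rfl | rfl | rfl | ⟨hI, hws⟩
      · exact Or.inl rfl
      · exfalso; have := hl.2; simp only at this; omega
      · exfalso; exact Bool.noConfusion hl.1
      · exfalso; exact Bool.noConfusion hl.1
      · refine Or.inr ⟨phiP w, ⟨hws, ?_⟩, tauP_phiP hI⟩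
        right
        refine ⟨hl.1, ?_⟩
        show w.2 - 1 < q
        have := hI.1
        have := hl.2
        omega
    · rintro (rfl | ⟨y', ⟨hy'w, hy'lex⟩, rfl⟩)
      · exact ⟨wEnd_a hB1 hB2 hC1 hC2, Or.inr ⟨rfl, show 0 < q+1 by omega⟩⟩
      · have hyI : InnerPt n (tauP y') :=
          ⟨show 1 ≤ y'.2+1 by omega, show y'.2+1 ≤ 2*n by have := hy'w.1; omega⟩
        refine ⟨(wEnd_phi hB1 hB2 hC1 hC2 hyI).mpr (by rw [phiP_tauP]; exact hy'w), ?_⟩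
        rw [lexLt_tau]
        exact hy'lex
  rw [hset]
  have hfin : {y | isWEnd n (shrink (n+1) D1) (shrink (n+1) D2) y ∧
      lexLt y ((false, q) : Bool × ℕ)}.Finite :=
    finite_of_bound (2*n) (fun x hx => hx.1.1)
  have hnm : ((false,0) : Bool × ℕ) ∉ tauP '' {y |
      isWEnd n (shrink (n+1) D1) (shrink (n+1) D2) y ∧
      lexLt y ((false, q) : Bool × ℕ)} := by
    rintro ⟨y', _, heq⟩
    have := congrArg Prod.snd heq
    simp [tauP] at this
  rw [Set.ncard_insert_of_notMem hnm (hfin.image tauP),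
    Set.ncard_image_of_injective _ tauP_inj]

theorem wRank_tau_true {q : ℕ}
    (hq : isWEnd n (shrink (n+1) D1) (shrink (n+1) D2) ((true, q) : Bool × ℕ)) :
    wRank (n+1) D1 D2 (tauP ((true, q) : Bool × ℕ))
      = wRank n (shrink (n+1) D1) (shrink (n+1) D2) ((true, q) : Bool × ℕ) + 3 := by
  have hq2 : q < 2*n := hq.1
  unfold wRank
  have hset : {y | isWEnd (n+1) D1 D2 y ∧ lexLt y (tauP ((true, q) : Bool × ℕ))}
      = insert ((false,0) : Bool × ℕ) (insert ((false,2*n+1) : Bool × ℕ)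
        (insert ((true,0) : Bool × ℕ)
        (tauP '' {y | isWEnd n (shrink (n+1) D1) (shrink (n+1) D2) y ∧
          lexLt y ((true, q) : Bool × ℕ)}))) := by
    ext w
    simp only [Set.mem_insert_iff, Set.mem_image, Set.mem_setOf_eq]
    constructor
    · rintro ⟨hw, hlex⟩
      have hl : (w.1 = false) ∨ (w.1 = true ∧ w.2 < q + 1) := by
        rcases hlex with ⟨h1', _⟩ | ⟨h1', h2'⟩
        · exact Or.inl h1'
        · exact Or.inr ⟨h1', h2'⟩
      rcases (bigWEnd_iff hB1 hB2 hC1 hC2).mp hw with rfl | rfl | rfl | rfl | ⟨hI, hws⟩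
      · exact Or.inl rfl
      · exact Or.inr (Or.inl rfl)
      · exact Or.inr (Or.inr (Or.inl rfl))
      · exfalso
        rcases hl with h | ⟨_, h2'⟩
        · exact Bool.noConfusion h
        · simp only at h2'; omega
      · refine Or.inr (Or.inr (Or.inr ⟨phiP w, ⟨hws, ?_⟩, tauP_phiP hI⟩))
        rcases hl with h | ⟨h1', h2'⟩
        · exact Or.inl ⟨h, rfl⟩
        · right
          refine ⟨h1', ?_⟩
          show w.2 - 1 < q
          have := hI.1
          omega
    · have htau : ∀ y' ∈ {y | isWEnd n (shrink (n+1) D1) (shrink (n+1) D2) y ∧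
          lexLt y ((true, q) : Bool × ℕ)},
          isWEnd (n+1) D1 D2 (tauP y') ∧ lexLt (tauP y') (tauP ((true, q) : Bool × ℕ)) := by
        rintro y' ⟨hy'w, hy'lex⟩
        have hyI : InnerPt n (tauP y') :=
          ⟨show 1 ≤ y'.2+1 by omega, show y'.2+1 ≤ 2*n by have := hy'w.1; omega⟩
        exact ⟨(wEnd_phi hB1 hB2 hC1 hC2 hyI).mpr (by rw [phiP_tauP]; exact hy'w),
          (lexLt_tau _ _).mpr hy'lex⟩
      rintro (rfl | rfl | rfl | ⟨y', hy'mem, rfl⟩)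
      · exact ⟨wEnd_a hB1 hB2 hC1 hC2, Or.inl ⟨rfl, rfl⟩⟩
      · exact ⟨wEnd_bb hB1 hB2 hC1 hC2, Or.inl ⟨rfl, rfl⟩⟩
      · exact ⟨wEnd_cc hB1 hB2 hC1 hC2, Or.inr ⟨rfl, show 0 < q+1 by omega⟩⟩
      · exact htau y' hy'mem
  rw [hset]
  have hfin : {y | isWEnd n (shrink (n+1) D1) (shrink (n+1) D2) y ∧
      lexLt y ((true, q) : Bool × ℕ)}.Finite :=
    finite_of_bound (2*n) (fun x hx => hx.1.1)
  have hfin2 := hfin.image tauP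
  have hni : ((true,0) : Bool × ℕ) ∉ tauP '' {y |
      isWEnd n (shrink (n+1) D1) (shrink (n+1) D2) y ∧
      lexLt y ((true, q) : Bool × ℕ)} := by
    rintro ⟨y', _, heq⟩
    have := congrArg Prod.snd heq
    simp [tauP] at this
  have hnbb : ((false,2*n+1) : Bool × ℕ) ∉ insert ((true,0) : Bool × ℕ)
      (tauP '' {y | isWEnd n (shrink (n+1) D1) (shrink (n+1) D2) y ∧
        lexLt y ((true, q) : Bool × ℕ)}) := by
    rintro (heq | ⟨y', ⟨hy'w, _⟩, heq⟩)
    · exact Bool.noConfusion (congrArg Prod.fst heq)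
    · have h1 := congrArg Prod.snd heq
      have h2 := hy'w.1
      simp only [tauP] at h1
      omega
  have hna : ((false,0) : Bool × ℕ) ∉ insert ((false,2*n+1) : Bool × ℕ)
      (insert ((true,0) : Bool × ℕ)
      (tauP '' {y | isWEnd n (shrink (n+1) D1) (shrink (n+1) D2) y ∧
        lexLt y ((true, q) : Bool × ℕ)})) := by
    rintro (heq | heq | ⟨y', _, heq⟩)
    · have := congrArg Prod.snd heq; simp only at this; omega
    · exact Bool.noConfusion (congrArg Prod.fst heq)
    · have := congrArg Prod.snd heq
      simp [tauP] at this
  rw [Set.ncard_insert_of_notMem hna ((hfin2.insert _).insert _),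
    Set.ncard_insert_of_notMem hnbb (hfin2.insert _),
    Set.ncard_insert_of_notMem hni hfin2,
    Set.ncard_image_of_injective _ tauP_inj]

theorem wRank_bb :
    wRank (n+1) D1 D2 ((false, 2*n+1) : Bool × ℕ)
      = {w : Bool × ℕ | isWEnd n (shrink (n+1) D1) (shrink (n+1) D2) w ∧
          w.1 = false}.ncard + 1 := by
  unfold wRank
  have hset : {y | isWEnd (n+1) D1 D2 y ∧ lexLt y ((false, 2*n+1) : Bool × ℕ)}
      = insert ((false,0) : Bool × ℕ)
        (tauP '' {w : Bool × ℕ | isWEnd n (shrink (n+1) D1) (shrink (n+1) D2) w ∧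
          w.1 = false}) := by
    ext w
    simp only [Set.mem_insert_iff, Set.mem_image, Set.mem_setOf_eq]
    constructor
    · rintro ⟨hw, hlex⟩
      have hl : w.1 = false ∧ w.2 < 2*n+1 := by
        rcases hlex with ⟨_, hcon⟩ | ⟨h1', h2'⟩
        · exact absurd hcon (by simp)
        · exact ⟨h1', h2'⟩
      rcases (bigWEnd_iff hB1 hB2 hC1 hC2).mp hw with rfl | rfl | rfl | rfl | ⟨hI, hws⟩
      · exact Or.inl rfl
      · exfalso; have := hl.2; simp only at this; omega
      · exact absurd hl.1 (by simp)
      · exact absurd hl.1 (by simp)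
      · exact Or.inr ⟨phiP w, ⟨hws, hl.1⟩, tauP_phiP hI⟩
    · rintro (rfl | ⟨y', ⟨hy'w, hy'f⟩, rfl⟩)
      · exact ⟨wEnd_a hB1 hB2 hC1 hC2, Or.inr ⟨rfl, show 0 < 2*n+1 by omega⟩⟩
      · have hyI : InnerPt n (tauP y') :=
          ⟨show 1 ≤ y'.2+1 by omega, show y'.2+1 ≤ 2*n by have := hy'w.1; omega⟩
        refine ⟨(wEnd_phi hB1 hB2 hC1 hC2 hyI).mpr (by rw [phiP_tauP]; exact hy'w), ?_⟩
        right
        refine ⟨hy'f, ?_⟩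
        show y'.2 + 1 < 2*n+1
        have := hy'w.1
        omega
  rw [hset]
  have hfin : {w : Bool × ℕ | isWEnd n (shrink (n+1) D1) (shrink (n+1) D2) w ∧
      w.1 = false}.Finite := finite_of_bound (2*n) (fun x hx => hx.1.1)
  have hnm : ((false,0) : Bool × ℕ) ∉ tauP '' {w : Bool × ℕ |
      isWEnd n (shrink (n+1) D1) (shrink (n+1) D2) w ∧ w.1 = false} := by
    rintro ⟨y', _, heq⟩
    have := congrArg Prod.snd heq
    simp [tauP] at this
  rw [Set.ncard_insert_of_notMem hnm (hfin.image tauP),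
    Set.ncard_image_of_injective _ tauP_inj]

end Counts

section Counts2

variable {n : ℕ} {D1 D2 : StripDiagram (n+1)}
variable (hB1 : WBasic (n+1) D1) (hB2 : WBasic (n+1) D2)
    (hC1 : CupCap (n+1) D1) (hC2 : CupCap (n+1) D2)

include hB1 hB2 hC1 hC2

theorem wRank_parity {x : Bool × ℕ} (hI : InnerPt n x)
    (hwx : isWEnd n (shrink (n+1) D1) (shrink (n+1) D2) (phiP x)) :
    (wRank (n+1) D1 D2 x + 1) % 2
      = (wRank n (shrink (n+1) D1) (shrink (n+1) D2) (phiP x)) % 2 := by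
  obtain ⟨b, i⟩ := x
  have hi1 : 1 ≤ i := hI.1
  cases b
  · rw [show phiP ((false, i) : Bool × ℕ) = ((false, i-1) : Bool × ℕ) from rfl] at hwx ⊢
    have h := wRank_tau_false hB1 hB2 hC1 hC2 (q := i-1) hwx
    have e : tauP ((false, i-1) : Bool × ℕ) = ((false, i) : Bool × ℕ) := by
      show ((false, i-1+1) : Bool × ℕ) = ((false, i) : Bool × ℕ)
      rw [show i-1+1 = i by omega]
    rw [e] at h
    rw [h]
    omega
  · rw [show phiP ((true, i) : Bool × ℕ) = ((true, i-1) : Bool × ℕ) from rfl] at hwx ⊢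
    have h := wRank_tau_true hB1 hB2 hC1 hC2 (q := i-1) hwx
    have e : tauP ((true, i-1) : Bool × ℕ) = ((true, i) : Bool × ℕ) := by
      show ((true, i-1+1) : Bool × ℕ) = ((true, i) : Bool × ℕ)
      rw [show i-1+1 = i by omega]
    rw [e] at h
    rw [h]
    omega

theorem layer_false_even :
    Even {w : Bool × ℕ | isWEnd n (shrink (n+1) D1) (shrink (n+1) D2) w ∧
      w.1 = false}.ncard := by
  have hE1 := shrink_wBasic hB1 hC1
  have hset : {w : Bool × ℕ | isWEnd n (shrink (n+1) D1) (shrink (n+1) D2) w ∧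
      w.1 = false} = (fun i => ((false, i) : Bool × ℕ)) ''
        {i : ℕ | i < 2*n ∧ (shrink (n+1) D1).dest i = SDest.west} := by
    ext w
    simp only [Set.mem_image, Set.mem_setOf_eq]
    constructor
    · rintro ⟨⟨hlt, hw⟩, hf⟩
      obtain ⟨b, i⟩ := w
      simp only at hf
      subst hf
      exact ⟨i, ⟨hlt, by rwa [ldest_false] at hw⟩, rfl⟩
    · rintro ⟨i, ⟨hlt, hw⟩, rfl⟩
      exact ⟨⟨hlt, by rw [ldest_false]; exact hw⟩, rfl⟩
  rw [hset, Set.ncard_image_of_injective _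
    (fun a b h => by simpa using congrArg Prod.snd h)]
  exact west_index_even hE1

theorem white_big_eq :
    {x : Bool × ℕ | isWWTop (n+1) D1 D2 x ∧ (wRank (n+1) D1 D2 x + 1) % 2 = 0}
    = insert ((false,2*n+1) : Bool × ℕ)
      (tauP '' {x : Bool × ℕ | isWWTop n (shrink (n+1) D1) (shrink (n+1) D2) x ∧
        (wRank n (shrink (n+1) D1) (shrink (n+1) D2) x + 1) % 2 = 1}) := by
  ext x
  simp only [Set.mem_insert_iff, Set.mem_image, Set.mem_setOf_eq]
  constructor
  · rintro ⟨htop, hpar⟩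
    rcases top_classify hB1 hB2 hC1 hC2 htop with rfl | hI
    · exact Or.inl rfl
    · right
      refine ⟨phiP x, ⟨(wwtop_inner_iff hB1 hB2 hC1 hC2 hI).mp htop, ?_⟩, tauP_phiP hI⟩
      have hwp := ((wwtop_inner_iff hB1 hB2 hC1 hC2 hI).mp htop).1
      have := wRank_parity hB1 hB2 hC1 hC2 hI hwp
      omega
  · rintro (rfl | ⟨y', ⟨htop', hpar'⟩, rfl⟩)
    · refine ⟨wwtop_bb hB1 hB2 hC1 hC2, ?_⟩
      rw [wRank_bb hB1 hB2 hC1 hC2]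
      obtain ⟨c, hc⟩ := layer_false_even hB1 hB2 hC1 hC2
      omega
    · have hyI : InnerPt n (tauP y') :=
        ⟨show 1 ≤ y'.2+1 by omega, show y'.2+1 ≤ 2*n by have := htop'.1.1; omega⟩
      refine ⟨(wwtop_inner_iff hB1 hB2 hC1 hC2 hyI).mpr
        (by rw [phiP_tauP]; exact htop'), ?_⟩
      have := wRank_parity hB1 hB2 hC1 hC2 hyI (by rw [phiP_tauP]; exact htop'.1)
      rw [phiP_tauP] at this
      omega

theorem black_big_eq :
    {x : Bool × ℕ | isWWTop (n+1) D1 D2 x ∧ (wRank (n+1) D1 D2 x + 1) % 2 = 1}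
    = tauP '' {x : Bool × ℕ | isWWTop n (shrink (n+1) D1) (shrink (n+1) D2) x ∧
        (wRank n (shrink (n+1) D1) (shrink (n+1) D2) x + 1) % 2 = 0} := by
  ext x
  simp only [Set.mem_image, Set.mem_setOf_eq]
  constructor
  · rintro ⟨htop, hpar⟩
    rcases top_classify hB1 hB2 hC1 hC2 htop with rfl | hI
    · exfalso
      rw [wRank_bb hB1 hB2 hC1 hC2] at hpar
      obtain ⟨c, hc⟩ := layer_false_even hB1 hB2 hC1 hC2
      omega
    · refine ⟨phiP x, ⟨(wwtop_inner_iff hB1 hB2 hC1 hC2 hI).mp htop, ?_⟩, tauP_phiP hI⟩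
      have hwp := ((wwtop_inner_iff hB1 hB2 hC1 hC2 hI).mp htop).1
      have := wRank_parity hB1 hB2 hC1 hC2 hI hwp
      omega
  · rintro ⟨y', ⟨htop', hpar'⟩, rfl⟩
    have hyI : InnerPt n (tauP y') :=
      ⟨show 1 ≤ y'.2+1 by omega, show y'.2+1 ≤ 2*n by have := htop'.1.1; omega⟩
    refine ⟨(wwtop_inner_iff hB1 hB2 hC1 hC2 hyI).mpr
      (by rw [phiP_tauP]; exact htop'), ?_⟩
    have := wRank_parity hB1 hB2 hC1 hC2 hyI (by rw [phiP_tauP]; exact htop'.1)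
    rw [phiP_tauP] at this
    omega

theorem nWWwhite_eq :
    nWWwhite (n+1) D1 D2
      = nWWblack n (shrink (n+1) D1) (shrink (n+1) D2) + 1 := by
  unfold nWWwhite nWWblack
  rw [white_big_eq hB1 hB2 hC1 hC2]
  have hfin : {x : Bool × ℕ | isWWTop n (shrink (n+1) D1) (shrink (n+1) D2) x ∧
      (wRank n (shrink (n+1) D1) (shrink (n+1) D2) x + 1) % 2 = 1}.Finite :=
    finite_of_bound (2*n) (fun x hx => hx.1.1.1)
  have hnm : ((false,2*n+1) : Bool × ℕ) ∉ tauP '' {x : Bool × ℕ |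
      isWWTop n (shrink (n+1) D1) (shrink (n+1) D2) x ∧
      (wRank n (shrink (n+1) D1) (shrink (n+1) D2) x + 1) % 2 = 1} := by
    rintro ⟨y', ⟨htop', _⟩, heq⟩
    have h1 := congrArg Prod.snd heq
    have h2 := htop'.1.1
    simp only [tauP] at h1
    omega
  rw [Set.ncard_insert_of_notMem hnm (hfin.image tauP),
    Set.ncard_image_of_injective _ tauP_inj]

theorem nWWblack_eq :
    nWWblack (n+1) D1 D2 = nWWwhite n (shrink (n+1) D1) (shrink (n+1) D2) := by
  unfold nWWwhite nWWblack
  rw [black_big_eq hB1 hB2 hC1 hC2,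
    Set.ncard_image_of_injective _ tauP_inj]

theorem nLoops_eq :
    nLoops (n+1) D1 D2 = nLoops n (shrink (n+1) D1) (shrink (n+1) D2) := by
  unfold nLoops
  have hset : {i : ℕ | n+1 ≤ i ∧ i < 2*(n+1) ∧ ¬ touchesBd (n+1) D1 D2 (false, i) ∧
      (¬ ∃ y, (isWEnd (n+1) D1 D2 y ∨ isEEnd (n+1) D1 D2 y) ∧
        SConn (n+1) D1 D2 (false, i) y) ∧
      (∀ j, n+1 ≤ j → j < 2*(n+1) → SConn (n+1) D1 D2 (false, i) (false, j) → i ≤ j)}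
      = (fun i => i + 1) ''
      {i : ℕ | n ≤ i ∧ i < 2*n ∧
        ¬ touchesBd n (shrink (n+1) D1) (shrink (n+1) D2) (false, i) ∧
      (¬ ∃ y, (isWEnd n (shrink (n+1) D1) (shrink (n+1) D2) y ∨
          isEEnd n (shrink (n+1) D1) (shrink (n+1) D2) y) ∧
        SConn n (shrink (n+1) D1) (shrink (n+1) D2) (false, i) y) ∧
      (∀ j, n ≤ j → j < 2*n →
        SConn n (shrink (n+1) D1) (shrink (n+1) D2) (false, i) (false, j) → i ≤ j)} := by
    ext i
    simp only [Set.mem_image, Set.mem_setOf_eq]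
    constructor
    · rintro ⟨h1, h2, h3, h4, h5⟩
      have hne : i ≠ 2*n+1 := by
        rintro rfl
        exact h4 ⟨((false, 2*n+1) : Bool × ℕ), Or.inl (wEnd_bb hB1 hB2 hC1 hC2),
          EqvGen.refl _⟩
      have hI : InnerPt n ((false, i) : Bool × ℕ) :=
        ⟨show 1 ≤ i by omega, show i ≤ 2*n by omega⟩
      refine ⟨i-1, ⟨by omega, by omega, ?_, ?_, ?_⟩, by omega⟩
      · intro ht
        exact h3 ((touches_iff hB1 hB2 hC1 hC2 hI).mpr ht)
      · intro hex
        exact h4 ((wall_iff hB1 hB2 hC1 hC2 hI).mpr hex)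
      · intro j' hj1 hj2 hc'
        have hcb := conn_pull hB1 hB2 hC1 hC2 hc'
        have e1 : tauP ((false, i-1) : Bool × ℕ) = ((false, i) : Bool × ℕ) := by
          show ((false, i-1+1) : Bool × ℕ) = _
          rw [show i-1+1 = i by omega]
        rw [e1] at hcb
        have := h5 (j'+1) (by omega) (by omega) hcb
        omega
    · rintro ⟨i', ⟨h1, h2, h3, h4, h5⟩, rfl⟩
      have hI : InnerPt n ((false, i'+1) : Bool × ℕ) :=
        ⟨show 1 ≤ i'+1 by omega, show i'+1 ≤ 2*n by omega⟩
      refine ⟨by omega, by omega, ?_, ?_, ?_⟩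
      · intro ht
        exact h3 ((touches_iff hB1 hB2 hC1 hC2 hI).mp ht)
      · intro hex
        exact h4 ((wall_iff hB1 hB2 hC1 hC2 hI).mp hex)
      · intro j hj1 hj2 hc
        by_cases hj : j = 2*n+1
        · omega
        · have hc' := (conn_push hB1 hB2 hC1 hC2 hc).2 hI
          have := h5 (j-1) (by omega) (by omega) hc'
          omega
  rw [hset, Set.ncard_image_of_injective _
    (fun a b (h : a + 1 = b + 1) => by omega)]

end Counts2

theorem coeff_eq {n : ℕ} {D1 D2 : StripDiagram (n+1)}
    (hB1 : WBasic (n+1) D1) (hB2 : WBasic (n+1) D2)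
    (hC1 : CupCap (n+1) D1) (hC2 : CupCap (n+1) D2)
    (k : Type) [Field k] (δ δe κ : k) (hδe : δe ≠ 0) :
    δe⁻¹ * wCoeff δ δe κ (n+1) D1 D2
      = wCoeff δ κ δe n (shrink (n+1) D1) (shrink (n+1) D2) := by
  unfold wCoeff
  rw [nLoops_eq hB1 hB2 hC1 hC2, nWWwhite_eq hB1 hB2 hC1 hC2,
    nWWblack_eq hB1 hB2 hC1 hC2, pow_succ]
  field_simp

theorem stmt12 (m : ℕ) (hm : 1 ≤ m) (k : Type) [Field k]
    (δ δe κ : k) (hδe : δe ≠ 0) :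
    ∃ ρ : {D : StripDiagram m // WBasic m D ∧ CupCap m D} →
        {D' : StripDiagram (m - 1) // WBasic (m - 1) D'},
      (∀ D, (ρ D).1 = shrink m D.1) ∧
      Function.Bijective ρ ∧
      ∀ D1 D2 : {D : StripDiagram m // WBasic m D ∧ CupCap m D},
        shrink m (compStrip m D1.1 D2.1)
            = compStrip (m - 1) (shrink m D1.1) (shrink m D2.1) ∧
        δe⁻¹ * wCoeff δ δe κ m D1.1 D2.1
            = wCoeff δ κ δe (m - 1) (shrink m D1.1) (shrink m D2.1) := by
  obtain ⟨n, rfl⟩ : ∃ n, m = n + 1 := ⟨m - 1, by omega⟩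
  refine ⟨fun D => ⟨shrink (n+1) D.1, shrink_wBasic D.2.1 D.2.2⟩, fun D => rfl, ?_, ?_⟩
  · apply Function.bijective_iff_has_inverse.mpr
    refine ⟨fun D' => ⟨expand n D'.1, expand_wBasic D'.2, expand_cupCap⟩, ?_, ?_⟩
    · intro D
      exact Subtype.ext (expand_shrink D.2.1 D.2.2)
    · intro D'
      exact Subtype.ext (shrink_expand D'.2)
  · intro D1 D2
    exact ⟨comp_shrink D1.2.1 D2.2.1 D1.2.2 D2.2.2,
      coeff_eq D1.2.1 D2.2.1 D1.2.2 D2.2.2 k δ δe κ hδe⟩
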